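/- arXiv:1402.1042 — 3 statements merged into one kernel-verified Lean document; each statement's English description precedes it below -/
import Mathlib

section
/- Let G be a locally compact second countable group. The set of closed subgroups H of G such that the modular function of G restricted to H equals the modular function of H (equivalently, such that G/H admits a nonzero G-invariant measure) is closed in the Chabauty topology on the space of closed subgroups of G. -/
open MeasureTheory Topology Set
open scoped Pointwise
open scoped ENNReal

noncomputable section

/-- The Fell (Chabauty) topology on the set of all subsets of `X`. -/
def fellTopology (X : Type*) [TopologicalSpace X] : TopologicalSpace (Set X) :=
  TopologicalSpace.generateFrom
    ({S | ∃ K : Set X, IsCompact K ∧ S = {A : Set X | A ∩ K = ∅}} ∪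
     {S | ∃ U : Set X, IsOpen U ∧ S = {A : Set X | (A ∩ U).Nonempty}})

/-- The Chabauty space of closed subgroups of `G`. -/
abbrev SubG (G : Type*) [Group G] [TopologicalSpace G] : Type _ :=
  {H : Subgroup G // IsClosed (H : Set G)}

instance SubG.topologicalSpace (G : Type*) [Group G] [TopologicalSpace G] :
    TopologicalSpace (SubG G) :=
  TopologicalSpace.induced (fun H : SubG G => ((H.1 : Subgroup G) : Set G)) (fellTopology G)

instance SubG.measurableSpace (G : Type*) [Group G] [TopologicalSpace G] :
    MeasurableSpace (SubG G) := borel _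


/-- The conjugation action of `g ∈ G` on the Chabauty space of closed subgroups,
`H ↦ gHg⁻¹`. -/
def conjSubG {G : Type*} [Group G] [TopologicalSpace G] [IsTopologicalGroup G]
    (g : G) (H : SubG G) : SubG G :=
  ⟨Subgroup.map (MulAut.conj g).toMonoidHom H.1, by
    have h : ((Subgroup.map (MulAut.conj g).toMonoidHom H.1 : Subgroup G) : Set G)
        = ((Homeomorph.mulLeft g).trans (Homeomorph.mulRight g⁻¹)) '' (H.1 : Set G) := by
      rw [Subgroup.coe_map]; rfl
    rw [h]
    exact (Homeomorph.isClosed_image _).mpr H.2⟩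

section Aux

set_option linter.unusedSectionVars false
variable {G : Type*} [Group G] [TopologicalSpace G] [IsTopologicalGroup G]
  [LocallyCompactSpace G] [SecondCountableTopology G]
  [MeasurableSpace G] [BorelSpace G]

lemma SubG.isOpen_avoid {K : Set G} (hK : IsCompact K) :
    IsOpen {H : SubG G | (H.1 : Set G) ∩ K = ∅} := by
  have h : IsOpen[fellTopology G] {A : Set G | A ∩ K = ∅} :=
    TopologicalSpace.isOpen_generateFrom_of_mem (Or.inl ⟨K, hK, rfl⟩)
  exact isOpen_induced (t := fellTopology G) h

lemma SubG.isOpen_meets {U : Set G} (hU : IsOpen U) :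
    IsOpen {H : SubG G | ((H.1 : Set G) ∩ U).Nonempty} := by
  have h : IsOpen[fellTopology G] {A : Set G | (A ∩ U).Nonempty} :=
    TopologicalSpace.isOpen_generateFrom_of_mem (Or.inr ⟨U, hU, rfl⟩)
  exact isOpen_induced (t := fellTopology G) h

/-- An auxiliary predicate: `ν` is a measure on `G` that behaves like (the pushforward of)
a left Haar measure of the closed subgroup `J` whose right-translation scaling factor is the
restriction of `ΔG`. -/
def GoodMeas (ΔG : G → ℝ≥0∞) (J : Subgroup G) (ν : Measure G) : Prop :=
  ν ((J : Set G)ᶜ) = 0 ∧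
  (∀ K : Set G, IsCompact K → ν K < ∞) ∧
  (∀ x ∈ J, Measure.map (fun y => x * y) ν = ν) ∧
  (∀ x ∈ J, Measure.map (fun y => y * x) ν = ΔG x • ν) ∧
  (∀ V ∈ 𝓝 (1 : G), 0 < ν V)

/-- Membership in the target set gives a good measure on `G`. -/
lemma goodMeas_of_exists_haar (ΔG : G → ℝ≥0∞) (H : SubG G)
    (h : ∃ μ : Measure ↥H.1, μ.IsHaarMeasure ∧
      ∀ h : ↥H.1, Measure.map (fun x => x * h) μ = ΔG (h : G) • μ) :
    ∃ ν : Measure G, GoodMeas ΔG H.1 ν := by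
  obtain ⟨μ, hμ, hsc⟩ := h
  haveI : BorelSpace ↥H.1 := Subtype.borelSpace (H.1 : Set G)
  haveI := hμ.toIsFiniteMeasureOnCompacts
  haveI := hμ.toIsOpenPosMeasure
  haveI := hμ.toIsMulLeftInvariant
  have hval : Measurable ((↑) : ↥H.1 → G) := measurable_subtype_coe
  have hmulL : ∀ x' : ↥H.1, Measurable fun z : ↥H.1 => x' * z := fun x' =>
    ((continuous_const.mul continuous_subtype_val).subtype_mk _).measurable
  have hmulR : ∀ x' : ↥H.1, Measurable fun z : ↥H.1 => z * x' := fun x' =>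
    ((continuous_subtype_val.mul continuous_const).subtype_mk _).measurable
  refine ⟨Measure.map (↑) μ, ?_, ?_, ?_, ?_, ?_⟩
  · rw [Measure.map_apply hval H.2.measurableSet.compl]
    have : ((↑) : ↥H.1 → G) ⁻¹' ((H.1 : Set G)ᶜ) = ∅ := by
      ext x; simp [x.2]
    simp [this]
  · intro K hK
    calc Measure.map (↑) μ K ≤ Measure.map (↑) μ (closure K) :=
          measure_mono subset_closure
      _ = μ (((↑) : ↥H.1 → G) ⁻¹' closure K) :=
          Measure.map_apply hval isClosed_closure.measurableSet
      _ < ∞ := by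
          have hemb : Topology.IsEmbedding ((↑) : ↥H.1 → G) := Topology.IsEmbedding.subtypeVal
          have hcomp : IsCompact (((↑) : ↥H.1 → G) ⁻¹' closure K) := by
            rw [hemb.isCompact_iff]
            have himg : ((↑) : ↥H.1 → G) '' (((↑) : ↥H.1 → G) ⁻¹' closure K)
                = closure K ∩ (H.1 : Set G) := by
              ext y
              constructor
              · rintro ⟨z, hz, rfl⟩; exact ⟨hz, z.2⟩
              · rintro ⟨h1, h2⟩; exact ⟨⟨y, h2⟩, h1, rfl⟩
            rw [himg]
            exact hK.closure.inter_right H.2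
          exact hcomp.measure_lt_top
  · intro x hx
    have h1 : (fun y : G => x * y) ∘ ((↑) : ↥H.1 → G)
        = ((↑) : ↥H.1 → G) ∘ (fun z : ↥H.1 => (⟨x, hx⟩ : ↥H.1) * z) := rfl
    rw [Measure.map_map (measurable_const_mul x) hval, h1,
      ← Measure.map_map hval (hmulL ⟨x, hx⟩),
      map_mul_left_eq_self μ (⟨x, hx⟩ : ↥H.1)]
  · intro x hx
    have h1 : (fun y : G => y * x) ∘ ((↑) : ↥H.1 → G)
        = ((↑) : ↥H.1 → G) ∘ (fun z : ↥H.1 => z * (⟨x, hx⟩ : ↥H.1)) := rfl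
    rw [Measure.map_map (measurable_mul_const x) hval, h1,
      ← Measure.map_map hval (hmulR ⟨x, hx⟩), hsc ⟨x, hx⟩, Measure.map_smul]
  · intro V hV
    have h1 : (1 : G) ∈ interior V := mem_interior_iff_mem_nhds.2 hV
    have : μ (((↑) : ↥H.1 → G) ⁻¹' interior V) ≠ 0 := by
      refine (isOpen_interior.preimage continuous_subtype_val).measure_ne_zero μ ?_
      exact ⟨⟨1, one_mem _⟩, h1⟩
    calc (0 : ℝ≥0∞) < μ (((↑) : ↥H.1 → G) ⁻¹' interior V) := pos_iff_ne_zero.2 this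
      _ = Measure.map (↑) μ (interior V) :=
          (Measure.map_apply hval isOpen_interior.measurableSet).symm
      _ ≤ Measure.map (↑) μ V := measure_mono interior_subset

lemma exists_haar_of_goodMeas (ΔG : G → ℝ≥0∞) (H : SubG G) (ν : Measure G)
    (hν : GoodMeas ΔG H.1 ν) :
    ∃ μ : Measure ↥H.1, μ.IsHaarMeasure ∧
      ∀ h : ↥H.1, Measure.map (fun x => x * h) μ = ΔG (h : G) • μ := by
  haveI : BorelSpace ↥H.1 := Subtype.borelSpace (H.1 : Set G)
  obtain ⟨hnull, hfin, hlinv, hrsc, hpos⟩ := hν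
  have hSm : MeasurableSet (H.1 : Set G) := H.2.measurableSet
  have hemb : MeasurableEmbedding ((↑) : ↥H.1 → G) := MeasurableEmbedding.subtype_coe hSm
  have hmulL : ∀ x' : ↥H.1, Measurable fun z : ↥H.1 => x' * z := fun x' =>
    ((continuous_const.mul continuous_subtype_val).subtype_mk _).measurable
  have hmulR : ∀ x' : ↥H.1, Measurable fun z : ↥H.1 => z * x' := fun x' =>
    ((continuous_subtype_val.mul continuous_const).subtype_mk _).measurable
  set μ : Measure ↥H.1 := Measure.comap (↑) ν with hμdef
  have capply : ∀ s : Set ↥H.1, MeasurableSet s → μ s = ν (((↑) : ↥H.1 → G) '' s) :=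
    fun s hs => Measure.comap_apply _ Subtype.coe_injective
      (fun t ht => hemb.measurableSet_image' ht) _ hs
  have himgL : ∀ (a : ↥H.1) (s : Set ↥H.1),
      ((↑) : ↥H.1 → G) '' ((fun z => a * z) ⁻¹' s)
        = ((fun y : G => (a : G) * y) ⁻¹' (((↑) : ↥H.1 → G) '' s)) ∩ (H.1 : Set G) := by
    intro a s; ext y; constructor
    · rintro ⟨z, hz, rfl⟩; exact ⟨⟨a * z, hz, rfl⟩, z.2⟩
    · rintro ⟨⟨w, hw, hwy⟩, hy⟩
      refine ⟨⟨y, hy⟩, ?_, rfl⟩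
      have heq : a * (⟨y, hy⟩ : ↥H.1) = w := Subtype.ext (by simpa using hwy.symm)
      show a * (⟨y, hy⟩ : ↥H.1) ∈ s
      rw [heq]; exact hw
  have himgR : ∀ (a : ↥H.1) (s : Set ↥H.1),
      ((↑) : ↥H.1 → G) '' ((fun z => z * a) ⁻¹' s)
        = ((fun y : G => y * (a : G)) ⁻¹' (((↑) : ↥H.1 → G) '' s)) ∩ (H.1 : Set G) := by
    intro a s; ext y; constructor
    · rintro ⟨z, hz, rfl⟩; exact ⟨⟨z * a, hz, rfl⟩, z.2⟩
    · rintro ⟨⟨w, hw, hwy⟩, hy⟩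
      refine ⟨⟨y, hy⟩, ?_, rfl⟩
      have heq : (⟨y, hy⟩ : ↥H.1) * a = w := Subtype.ext (by simpa using hwy.symm)
      show (⟨y, hy⟩ : ↥H.1) * a ∈ s
      rw [heq]; exact hw
  haveI instL : μ.IsMulLeftInvariant := by
    constructor; intro a
    refine Measure.ext fun s hs => ?_
    rw [Measure.map_apply (hmulL a) hs, capply _ ((hmulL a) hs), himgL a s,
      measure_inter_conull hnull,
      ← Measure.map_apply (measurable_const_mul (a : G)) (hemb.measurableSet_image' hs),
      hlinv (a : G) a.2, ← capply s hs]
  haveI instF : IsFiniteMeasureOnCompacts μ := by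
    constructor; intro K hK
    have hsub : K ⊆ ((↑) : ↥H.1 → G) ⁻¹' (closure (((↑) : ↥H.1 → G) '' K)) :=
      fun x hx => subset_closure (mem_image_of_mem _ hx)
    calc μ K ≤ μ (((↑) : ↥H.1 → G) ⁻¹' (closure (((↑) : ↥H.1 → G) '' K))) :=
          measure_mono hsub
      _ = ν (((↑) : ↥H.1 → G) '' (((↑) : ↥H.1 → G) ⁻¹' (closure (((↑) : ↥H.1 → G) '' K)))) :=
          capply _ (hemb.measurable isClosed_closure.measurableSet)
      _ ≤ ν (closure (((↑) : ↥H.1 → G) '' K)) := measure_mono (image_preimage_subset _ _)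
      _ < ∞ := hfin _ (hK.image continuous_subtype_val).closure
  haveI instO : μ.IsOpenPosMeasure := by
    constructor; intro U hU hUne
    obtain ⟨y, hy⟩ := hUne
    set U' : Set ↥H.1 := (fun z : ↥H.1 => y * z) ⁻¹' U with hU'def
    have hU'open : IsOpen U' := hU.preimage ((continuous_const.mul continuous_subtype_val).subtype_mk _)
    have h1U' : (1 : ↥H.1) ∈ U' := by simp [hU'def, hy]
    have heq : μ U' = μ U := measure_preimage_mul μ y U
    rw [← heq]
    obtain ⟨V, hVopen, hVeq⟩ := isOpen_induced_iff.mp hU'open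
    have h1V : (1 : G) ∈ V := by
      have : ((1 : ↥H.1) : G) ∈ V := by
        rw [← hVeq] at h1U'; exact h1U'
      simpa using this
    have himg : ((↑) : ↥H.1 → G) '' U' = V ∩ (H.1 : Set G) := by
      rw [← hVeq]; ext z; constructor
      · rintro ⟨w, hw, rfl⟩; exact ⟨hw, w.2⟩
      · rintro ⟨h1, h2⟩; exact ⟨⟨z, h2⟩, h1, rfl⟩
    rw [capply _ hU'open.measurableSet, himg, measure_inter_conull hnull]
    exact (hpos V (hVopen.mem_nhds h1V)).ne'
  refine ⟨μ, ?_, ?_⟩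
  · constructor
  intro a
  refine Measure.ext fun s hs => ?_
  rw [Measure.map_apply (hmulR a) hs, capply _ ((hmulR a) hs), himgR a s,
    measure_inter_conull hnull,
    ← Measure.map_apply (measurable_mul_const (a : G)) (hemb.measurableSet_image' hs),
    hrsc (a : G) a.2, Measure.smul_apply, ← capply s hs, Measure.smul_apply]

/-- Uniform continuity of left translates of a compactly supported continuous function. -/
lemma unif_left {f : G → ℝ} (hf : Continuous f) (hsupp : HasCompactSupport f) (x₀ : G)
    {ε : ℝ} (hε : 0 < ε) {Q : Set G} (hQc : IsCompact Q) (hQn : Q ∈ 𝓝 x₀) :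
    ∃ V ∈ 𝓝 x₀, V ⊆ Q ∧ ∀ y ∈ V, ∀ z, |f (y * z) - f (x₀ * z)| ≤ ε := by
  set K := tsupport f with hKdef
  have hKc : IsCompact K := hsupp
  set Z : Set G := Q⁻¹ * K with hZdef
  have hZc : IsCompact Z := hQc.inv.mul hKc
  have key : ∀ z : G, ∃ (U W : Set G), U ∈ 𝓝 x₀ ∧ W ∈ 𝓝 z ∧
      ∀ y ∈ U, ∀ w ∈ W, |f (y * w) - f (x₀ * z)| < ε / 2 := by
    intro z
    have hc : ContinuousAt (fun p : G × G => f (p.1 * p.2)) (x₀, z) :=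
      (hf.comp continuous_mul).continuousAt
    have hball : Metric.ball (f (x₀ * z)) (ε / 2) ∈ 𝓝 (f (x₀ * z)) :=
      Metric.ball_mem_nhds _ (half_pos hε)
    have hpre := hc.preimage_mem_nhds hball
    rw [mem_nhds_prod_iff] at hpre
    obtain ⟨U, hU, W, hW, hUW⟩ := hpre
    refine ⟨U, W, hU, hW, fun y hy w hw => ?_⟩
    have := hUW (Set.mk_mem_prod hy hw)
    simpa [Real.dist_eq] using this
  choose U W hU hW hUW using key
  obtain ⟨t, _, hcov⟩ := hZc.elim_nhds_subcover W (fun z _ => hW z)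
  refine ⟨interior Q ∩ ⋂ z ∈ t, U z, ?_, fun y hy => interior_subset hy.1, ?_⟩
  · exact Filter.inter_mem (isOpen_interior.mem_nhds (mem_interior_iff_mem_nhds.2 hQn))
      ((Filter.biInter_finset_mem t).2 fun z _ => hU z)
  · intro y hy z
    by_cases hz : z ∈ Z
    · obtain ⟨z₀, hz₀t, hzW⟩ := Set.mem_iUnion₂.1 (hcov hz)
      have h1 := hUW z₀ y (Set.mem_iInter₂.1 hy.2 z₀ hz₀t) z hzW
      have h2 := hUW z₀ x₀ (mem_of_mem_nhds (hU z₀)) z hzW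
      have habs : |f (y * z) - f (x₀ * z)| ≤
          |f (y * z) - f (x₀ * z₀)| + |f (x₀ * z₀) - f (x₀ * z)| := abs_sub_le _ _ _
      rw [abs_sub_comm (f (x₀ * z₀)) (f (x₀ * z))] at habs
      linarith
    · have hyQ : y ∈ Q := interior_subset hy.1
      have hx₀Q : x₀ ∈ Q := mem_of_mem_nhds hQn
      have hy0 : f (y * z) = 0 := by
        by_contra h
        exact hz ⟨y⁻¹, Set.inv_mem_inv.2 hyQ, y * z, subset_tsupport f h, by group⟩
      have hx0 : f (x₀ * z) = 0 := by
        by_contra h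
        exact hz ⟨x₀⁻¹, Set.inv_mem_inv.2 hx₀Q, x₀ * z, subset_tsupport f h, by group⟩
      rw [hy0, hx0]
      simpa using hε.le

/-- Uniform continuity of right translates of a compactly supported continuous function. -/
lemma unif_right {f : G → ℝ} (hf : Continuous f) (hsupp : HasCompactSupport f) (x₀ : G)
    {ε : ℝ} (hε : 0 < ε) {Q : Set G} (hQc : IsCompact Q) (hQn : Q ∈ 𝓝 x₀) :
    ∃ V ∈ 𝓝 x₀, V ⊆ Q ∧ ∀ y ∈ V, ∀ z, |f (z * y) - f (z * x₀)| ≤ ε := by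
  set K := tsupport f with hKdef
  have hKc : IsCompact K := hsupp
  set Z : Set G := K * Q⁻¹ with hZdef
  have hZc : IsCompact Z := hKc.mul hQc.inv
  have key : ∀ z : G, ∃ (U W : Set G), U ∈ 𝓝 x₀ ∧ W ∈ 𝓝 z ∧
      ∀ y ∈ U, ∀ w ∈ W, |f (w * y) - f (z * x₀)| < ε / 2 := by
    intro z
    have hc : ContinuousAt (fun p : G × G => f (p.2 * p.1)) (x₀, z) := by
      have : Continuous (fun p : G × G => f (p.2 * p.1)) :=
        hf.comp (continuous_snd.mul continuous_fst)
      exact this.continuousAt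
    have hball : Metric.ball (f (z * x₀)) (ε / 2) ∈ 𝓝 (f (z * x₀)) :=
      Metric.ball_mem_nhds _ (half_pos hε)
    have hpre := hc.preimage_mem_nhds hball
    rw [mem_nhds_prod_iff] at hpre
    obtain ⟨U, hU, W, hW, hUW⟩ := hpre
    refine ⟨U, W, hU, hW, fun y hy w hw => ?_⟩
    have := hUW (Set.mk_mem_prod hy hw)
    simpa [Real.dist_eq] using this
  choose U W hU hW hUW using key
  obtain ⟨t, _, hcov⟩ := hZc.elim_nhds_subcover W (fun z _ => hW z)
  refine ⟨interior Q ∩ ⋂ z ∈ t, U z, ?_, fun y hy => interior_subset hy.1, ?_⟩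
  · exact Filter.inter_mem (isOpen_interior.mem_nhds (mem_interior_iff_mem_nhds.2 hQn))
      ((Filter.biInter_finset_mem t).2 fun z _ => hU z)
  · intro y hy z
    by_cases hz : z ∈ Z
    · obtain ⟨z₀, hz₀t, hzW⟩ := Set.mem_iUnion₂.1 (hcov hz)
      have h1 := hUW z₀ y (Set.mem_iInter₂.1 hy.2 z₀ hz₀t) z hzW
      have h2 := hUW z₀ x₀ (mem_of_mem_nhds (hU z₀)) z hzW
      have habs : |f (z * y) - f (z * x₀)| ≤
          |f (z * y) - f (z₀ * x₀)| + |f (z₀ * x₀) - f (z * x₀)| := abs_sub_le _ _ _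
      rw [abs_sub_comm (f (z₀ * x₀)) (f (z * x₀))] at habs
      linarith
    · have hyQ : y ∈ Q := interior_subset hy.1
      have hx₀Q : x₀ ∈ Q := mem_of_mem_nhds hQn
      have hy0 : f (z * y) = 0 := by
        by_contra h
        exact hz ⟨z * y, subset_tsupport f h, y⁻¹, Set.inv_mem_inv.2 hyQ, by group⟩
      have hx0 : f (z * x₀) = 0 := by
        by_contra h
        exact hz ⟨z * x₀, subset_tsupport f h, x₀⁻¹, Set.inv_mem_inv.2 hx₀Q, by group⟩
      rw [hy0, hx0]
      simpa using hε.le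

lemma exists_cover_data (K : Set G) (hK : IsCompact K) {C : Set G} (hCn : C ∈ 𝓝 1) :
    ∃ (t : Finset G) (W : Set G), IsOpen W ∧ (1:G) ∈ W ∧ W⁻¹ = W ∧ W * W ⊆ C ∧
      K ⊆ ⋃ g ∈ t, (g * ·) '' W := by
  obtain ⟨V, hVo, hV1, hVV⟩ := exists_open_nhds_one_mul_subset hCn
  set W := V ∩ V⁻¹ with hWdef
  have hWo : IsOpen W := hVo.inter hVo.inv
  have hW1 : (1:G) ∈ W := ⟨hV1, by simpa using hV1⟩
  obtain ⟨t, _, hcov⟩ := hK.elim_nhds_subcover (fun g => (g * ·) '' W)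
    (fun g _ => ((isOpenMap_mul_left g) _ hWo).mem_nhds ⟨1, hW1, mul_one g⟩)
  refine ⟨t, W, hWo, hW1, ?_, ?_, hcov⟩
  · ext x
    simp only [hWdef, Set.mem_inv, Set.mem_inter_iff]
    constructor <;>
      · rintro ⟨h1, h2⟩; exact ⟨by simpa using h2, by simpa using h1⟩
  · exact subset_trans (Set.mul_subset_mul inter_subset_left inter_subset_left) hVV

lemma cov_bound {J : Subgroup G} {ν : Measure G}
    (hnull : ν ((J : Set G)ᶜ) = 0)
    (hlinv : ∀ x ∈ J, Measure.map (fun y => x * y) ν = ν)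
    {K C : Set G} (hC : MeasurableSet C)
    (t : Finset G) (W : Set G)
    (hWs : W⁻¹ = W) (hWW : W * W ⊆ C) (hcov : K ⊆ ⋃ g ∈ t, (g * ·) '' W) :
    ν K ≤ t.card * ν C := by
  calc ν K ≤ ν (⋃ g ∈ t, (g * ·) '' W) := measure_mono hcov
    _ ≤ ∑ g ∈ t, ν ((g * ·) '' W) := measure_biUnion_finset_le t _
    _ ≤ ∑ _g ∈ t, ν C := by
        refine Finset.sum_le_sum fun g _ => ?_
        by_cases hg : (((g * ·) '' W) ∩ (J : Set G)).Nonempty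
        · obtain ⟨x, ⟨w, hw, hxw⟩, hxJ⟩ := hg
          have hsub : (g * ·) '' W ⊆ (fun y => x⁻¹ * y) ⁻¹' C := by
            rintro _ ⟨w', hw', rfl⟩
            have heq : x⁻¹ * (g * w') = w⁻¹ * w' := by rw [← hxw]; group
            have hwinv : w⁻¹ ∈ W := by rw [← hWs]; exact Set.inv_mem_inv.2 hw
            show x⁻¹ * (g * w') ∈ C
            rw [heq]
            exact hWW (Set.mul_mem_mul hwinv hw')
          calc ν ((g * ·) '' W) ≤ ν ((fun y => x⁻¹ * y) ⁻¹' C) := measure_mono hsub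
            _ = Measure.map (fun y => x⁻¹ * y) ν C :=
                (Measure.map_apply (measurable_const_mul _) hC).symm
            _ = ν C := by rw [hlinv _ (inv_mem hxJ)]
        · have hsub : (g * ·) '' W ⊆ (J : Set G)ᶜ := by
            intro y hy hyJ
            exact hg ⟨y, hy, hyJ⟩
          calc ν ((g * ·) '' W) ≤ ν ((J : Set G)ᶜ) := measure_mono hsub
            _ = 0 := hnull
            _ ≤ ν C := zero_le
    _ = t.card * ν C := by rw [Finset.sum_const, nsmul_eq_mul]

lemma integral_abs_le_measure {ν : Measure G} {f : G → ℝ}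
    {A : Set G} (hA : MeasurableSet A) (hAfin : ν A < ∞)
    (hsub : tsupport f ⊆ A) {c : ℝ} (hc : ∀ z, |f z| ≤ c) :
    |∫ z, f z ∂ν| ≤ c * (ν A).toReal := by
  rw [← setIntegral_eq_integral_of_forall_compl_eq_zero
    (fun x hx => image_eq_zero_of_notMem_tsupport (fun h => hx (hsub h)))]
  have := norm_setIntegral_le_of_norm_le_const (f := f) hAfin
    (fun x _ => by simpa using hc x)
  simpa [Real.norm_eq_abs, Measure.real] using this

lemma deltaG_facts (ℓ : Measure G) [ℓ.IsHaarMeasure] (ΔG : G → ℝ≥0∞)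
    (hΔG : ∀ g : G, Measure.map (fun x => x * g) ℓ = ΔG g • ℓ) :
    ∀ g, ΔG g ≠ 0 ∧ ΔG g ≠ ∞ := by
  intro g
  obtain ⟨K₀', hK₀'c, hK₀'n⟩ := exists_compact_mem_nhds (1 : G)
  set K := closure K₀' with hKdef
  have hKc : IsCompact K := hK₀'c.closure
  have hKn : K ∈ 𝓝 1 := Filter.mem_of_superset hK₀'n subset_closure
  have hKm : MeasurableSet K := isClosed_closure.measurableSet
  have hpos : 0 < ℓ K :=
    lt_of_lt_of_le (isOpen_interior.measure_pos ℓ ⟨1, mem_interior_iff_mem_nhds.2 hKn⟩)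
      (measure_mono interior_subset)
  have hfin : ℓ K < ∞ := hKc.measure_lt_top
  have hmap : ℓ ((fun x => x * g) ⁻¹' K) = ΔG g * ℓ K := by
    rw [← Measure.map_apply (measurable_mul_const g) hKm, hΔG g, Measure.smul_apply,
      smul_eq_mul]
  have hpre_pos : 0 < ℓ ((fun x => x * g) ⁻¹' K) := by
    refine lt_of_lt_of_le (isOpen_interior.measure_pos ℓ ⟨g⁻¹, ?_⟩)
      (measure_mono interior_subset)
    exact mem_interior_iff_mem_nhds.2
      ((continuous_mul_right g).continuousAt.preimage_mem_nhds (by simpa using hKn))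
  have hpre_fin : ℓ ((fun x => x * g) ⁻¹' K) < ∞ := by
    have himg : (fun x => x * g) ⁻¹' K = (fun x => x * g⁻¹) '' K := by
      ext x
      simp only [mem_preimage, Set.mem_image]
      constructor
      · intro h; exact ⟨x * g, h, by group⟩
      · rintro ⟨k, hk, rfl⟩; simpa [mul_assoc] using hk
    rw [himg]
    exact (hKc.image (continuous_mul_right g⁻¹)).measure_lt_top
  constructor
  · intro h0; rw [h0, zero_mul] at hmap; exact hpre_pos.ne' hmap
  · intro hinf; rw [hinf, ENNReal.top_mul hpos.ne'] at hmap; exact hpre_fin.ne hmap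

/-- Test functions: continuous, compactly supported, nonnegative. -/
def IsTest (f : G → ℝ) : Prop := Continuous f ∧ HasCompactSupport f ∧ ∀ z, 0 ≤ f z

lemma urysohn_test {K U : Set G} (hK : IsCompact K) (hU : IsOpen U) (hKU : K ⊆ U) :
    ∃ f : G → ℝ, IsTest f ∧ (∀ z ∈ K, f z = 1) ∧ tsupport f ⊆ U ∧ ∀ z, f z ≤ 1 := by
  obtain ⟨L, hLc, hLcl, hKL, hLU⟩ := exists_compact_closed_between hK hU hKU
  obtain ⟨f, hf1, hf0, hfc, hficc⟩ := exists_continuous_one_zero_of_isCompact hK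
    isOpen_interior.isClosed_compl (disjoint_compl_right_iff_subset.mpr hKL)
  refine ⟨⇑f, ⟨f.continuous, hfc, fun z => (hficc z).1⟩, fun z hz => hf1 hz, ?_,
    fun z => (hficc z).2⟩
  have hsupp : Function.support f ⊆ interior L := by
    intro z hz; by_contra hzc; exact hz (hf0 hzc)
  calc tsupport f ⊆ closure (interior L) := closure_mono hsupp
    _ ⊆ L := (IsClosed.closure_subset_iff hLcl).2 interior_subset
    _ ⊆ U := hLU

lemma goodMeas_of_functional (ΔG : G → ℝ≥0∞) (hΔ : ∀ g : G, ΔG g ≠ 0 ∧ ΔG g ≠ ∞)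
    (hΔinv : ∀ g : G, ΔG g⁻¹ * ΔG g = 1)
    (H : SubG G) (Λ : (G → ℝ) → ℝ)
    (hmono : ∀ f g : G → ℝ, IsTest f → IsTest g → (∀ z, f z ≤ g z) → Λ f ≤ Λ g)
    (hzero : Λ 0 = 0)
    (hadd : ∀ f g : G → ℝ, IsTest f → IsTest g → Λ (f + g) = Λ f + Λ g)
    (hvanish : ∀ f : G → ℝ, IsTest f → tsupport f ∩ (H.1 : Set G) = ∅ → Λ f = 0)
    (hleft : ∀ x ∈ H.1, ∀ f : G → ℝ, IsTest f → Λ (fun z => f (x * z)) = Λ f)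
    (hright : ∀ x ∈ H.1, ∀ f : G → ℝ, IsTest f →
      Λ (fun z => f (z * x)) = (ΔG x).toReal * Λ f)
    (hlower : ∀ C : Set G, IsCompact C → C ∈ 𝓝 1 →
      ∃ c : ℝ, 0 < c ∧ ∀ f : G → ℝ, IsTest f → (∀ z ∈ C, 1 ≤ f z) → c ≤ Λ f) :
    ∃ ν : Measure G, GoodMeas ΔG H.1 ν := by
  classical
  have htest0 : IsTest (0 : G → ℝ) :=
    ⟨continuous_const, by simp [HasCompactSupport, tsupport], fun z => le_refl 0⟩
  have hΛnonneg : ∀ f : G → ℝ, IsTest f → 0 ≤ Λ f := by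
    intro f hf
    have := hmono 0 f htest0 hf (fun z => hf.2.2 z)
    rwa [hzero] at this
  -- the candidate content data
  set TestFor : Set G → Set (G → ℝ) :=
    fun K => {f : G → ℝ | IsTest f ∧ ∀ z ∈ K, 1 ≤ f z} with hTFdef
  set lam0 : Set G → ℝ := fun K => sInf (Λ '' TestFor K) with hlamdef
  have hTFne : ∀ {K : Set G}, IsCompact K → (TestFor K).Nonempty := by
    intro K hK
    obtain ⟨f, hf, hf1, _, _⟩ := urysohn_test hK isOpen_univ (subset_univ K)
    exact ⟨f, hf, fun z hz => (hf1 z hz).ge⟩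
  have hbdd : ∀ K : Set G, BddBelow (Λ '' TestFor K) := by
    intro K
    exact ⟨0, fun r ⟨f, hf, hr⟩ => hr ▸ hΛnonneg f hf.1⟩
  have hlam_nonneg : ∀ K : Set G, 0 ≤ lam0 K := by
    intro K
    apply Real.sInf_nonneg
    rintro r ⟨f, hf, rfl⟩
    exact hΛnonneg f hf.1
  have hlam_le : ∀ {K : Set G} {f : G → ℝ}, f ∈ TestFor K → lam0 K ≤ Λ f :=
    fun hf => csInf_le (hbdd _) ⟨_, hf, rfl⟩
  have hlam_lt : ∀ {K : Set G}, IsCompact K → ∀ {ε : ℝ}, 0 < ε →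
      ∃ f ∈ TestFor K, Λ f < lam0 K + ε := by
    intro K hK ε hε
    obtain ⟨r, ⟨f, hf, rfl⟩, hr⟩ := Real.lt_sInf_add_pos (Set.Nonempty.image Λ (hTFne hK)) hε
    exact ⟨f, hf, hr⟩
  have hlam_mono : ∀ {K₁ K₂ : Set G}, IsCompact K₂ → K₁ ⊆ K₂ → lam0 K₁ ≤ lam0 K₂ := by
    intro K₁ K₂ hK₂ hsub
    refine csInf_le_csInf (hbdd _) (Set.Nonempty.image Λ (hTFne hK₂)) ?_
    rintro r ⟨f, ⟨hf, h1⟩, hr⟩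
    exact ⟨f, ⟨hf, fun z hz => h1 z (hsub hz)⟩, hr⟩
  have hlam_sup_le : ∀ {K₁ K₂ : Set G}, IsCompact K₁ → IsCompact K₂ →
      lam0 (K₁ ∪ K₂) ≤ lam0 K₁ + lam0 K₂ := by
    intro K₁ K₂ h1 h2
    refine le_of_forall_pos_le_add fun ε hε => ?_
    obtain ⟨f₁, hf₁, hΛ₁⟩ := hlam_lt h1 (half_pos hε)
    obtain ⟨f₂, hf₂, hΛ₂⟩ := hlam_lt h2 (half_pos hε)
    have hsum : f₁ + f₂ ∈ TestFor (K₁ ∪ K₂) := by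
      refine ⟨⟨hf₁.1.1.add hf₂.1.1, hf₁.1.2.1.add hf₂.1.2.1,
        fun z => add_nonneg (hf₁.1.2.2 z) (hf₂.1.2.2 z)⟩, ?_⟩
      rintro z (hz | hz)
      · have h1' := hf₁.2 z hz; have h2' := hf₂.1.2.2 z
        simp only [Pi.add_apply]; linarith
      · have h1' := hf₂.2 z hz; have h2' := hf₁.1.2.2 z
        simp only [Pi.add_apply]; linarith
    calc lam0 (K₁ ∪ K₂) ≤ Λ (f₁ + f₂) := hlam_le hsum
      _ = Λ f₁ + Λ f₂ := hadd _ _ hf₁.1 hf₂.1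
      _ ≤ (lam0 K₁ + lam0 K₂) + ε := by linarith
  have hlam_disj : ∀ {K₁ K₂ : Set G}, IsCompact K₁ → IsCompact K₂ → Disjoint K₁ K₂ →
      IsClosed K₂ → lam0 K₁ + lam0 K₂ ≤ lam0 (K₁ ∪ K₂) := by
    intro K₁ K₂ h1 h2 hdis hcl₂
    refine le_of_forall_pos_le_add fun ε hε => ?_
    obtain ⟨f, hf, hΛf⟩ := hlam_lt (h1.union h2) hε
    obtain ⟨χ, hχ, hχ1, hχsupp, hχle⟩ := urysohn_test h1 hcl₂.isOpen_compl
      hdis.subset_compl_right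
    have hf₁test : IsTest (fun z => f z * χ z) :=
      ⟨hf.1.1.mul hχ.1, hf.1.2.1.mul_right,
        fun z => mul_nonneg (hf.1.2.2 z) (hχ.2.2 z)⟩
    have hf₂test : IsTest (fun z => f z * (1 - χ z)) :=
      ⟨hf.1.1.mul (continuous_const.sub hχ.1), hf.1.2.1.mul_right,
        fun z => mul_nonneg (hf.1.2.2 z) (by linarith [hχle z])⟩
    have hf₁mem : (fun z => f z * χ z) ∈ TestFor K₁ := by
      refine ⟨hf₁test, fun z hz => ?_⟩
      show 1 ≤ f z * χ z
      rw [hχ1 z hz, mul_one]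
      exact hf.2 z (Or.inl hz)
    have hf₂mem : (fun z => f z * (1 - χ z)) ∈ TestFor K₂ := by
      refine ⟨hf₂test, fun z hz => ?_⟩
      have hχ0 : χ z = 0 := by
        by_contra hne
        exact (hχsupp (subset_tsupport χ hne)) hz
      show 1 ≤ f z * (1 - χ z)
      rw [hχ0]
      simpa using hf.2 z (Or.inr hz)
    have hsum : (fun z => f z * χ z) + (fun z => f z * (1 - χ z)) = f := by
      funext z; simp only [Pi.add_apply]; ring
    calc lam0 K₁ + lam0 K₂ ≤ Λ (fun z => f z * χ z) + Λ (fun z => f z * (1 - χ z)) :=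
          add_le_add (hlam_le hf₁mem) (hlam_le hf₂mem)
      _ = Λ ((fun z => f z * χ z) + (fun z => f z * (1 - χ z))) :=
          (hadd _ _ hf₁test hf₂test).symm
      _ = Λ f := by rw [hsum]
      _ ≤ lam0 (K₁ ∪ K₂) + ε := hΛf.le
  set cont : Content G := {
    toFun := fun K => (lam0 K.1).toNNReal
    mono' := fun K₁ K₂ h => Real.toNNReal_mono (hlam_mono K₂.2 h)
    sup_disjoint' := by
      intro K₁ K₂ hdis _hc₁ hc₂
      have h1 := hlam_sup_le K₁.2 K₂.2
      have h2 := hlam_disj K₁.2 K₂.2 hdis hc₂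
      have heq : lam0 (↑K₁ ∪ ↑K₂) = lam0 ↑K₁ + lam0 ↑K₂ := le_antisymm h1 h2
      have hco : ((K₁ ⊔ K₂ : TopologicalSpace.Compacts G) : Set G) = ↑K₁ ∪ ↑K₂ := rfl
      show (lam0 ((K₁ ⊔ K₂ : TopologicalSpace.Compacts G) : Set G)).toNNReal
        = (lam0 (K₁ : Set G)).toNNReal + (lam0 (K₂ : Set G)).toNNReal
      rw [hco, heq, Real.toNNReal_add (hlam_nonneg _) (hlam_nonneg _)]
    sup_le' := by
      intro K₁ K₂
      have h1 := hlam_sup_le K₁.2 K₂.2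
      have hco : ((K₁ ⊔ K₂ : TopologicalSpace.Compacts G) : Set G) = ↑K₁ ∪ ↑K₂ := rfl
      show (lam0 ((K₁ ⊔ K₂ : TopologicalSpace.Compacts G) : Set G)).toNNReal
        ≤ (lam0 (K₁ : Set G)).toNNReal + (lam0 (K₂ : Set G)).toNNReal
      calc (lam0 ((K₁ ⊔ K₂ : TopologicalSpace.Compacts G) : Set G)).toNNReal
          = (lam0 ((K₁ : Set G) ∪ (K₂ : Set G))).toNNReal := by rw [hco]
        _ ≤ (lam0 ((K₁ : Set G)) + lam0 ((K₂ : Set G))).toNNReal := Real.toNNReal_mono h1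
        _ = (lam0 ((K₁ : Set G))).toNNReal + (lam0 ((K₂ : Set G))).toNNReal :=
            Real.toNNReal_add (hlam_nonneg _) (hlam_nonneg _) } with hcontdef
  set ν : Measure G := cont.measure with hνdef
  have hν_open : ∀ (U : Set G) (hU : IsOpen U), ν U = cont.innerContent ⟨U, hU⟩ := by
    intro U hU
    rw [hνdef, cont.measure_apply hU.measurableSet]
    exact cont.outerMeasure_opens ⟨U, hU⟩
  have hcont_eval : ∀ (S : Set G) (hS : IsCompact S),
      (cont ⟨S, hS⟩ : ℝ≥0∞) = ENNReal.ofReal (lam0 S) := fun S hS => rfl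
  have hcont_eval' : ∀ K : TopologicalSpace.Compacts G,
      (cont K : ℝ≥0∞) = ENNReal.ofReal (lam0 ↑K) := fun K => rfl
  haveI hνouter : ν.OuterRegular := by rw [hνdef]; exact cont.outerRegular
  -- content transformation under left translation by elements of H
  have hlam_left : ∀ x ∈ H.1, ∀ S : Set G, lam0 ((fun y => x * y) '' S) = lam0 S := by
    intro x hx S
    have himage : Λ '' TestFor ((fun y => x * y) '' S) = Λ '' TestFor S := by
      apply Set.Subset.antisymm
      · rintro _ ⟨f, ⟨hf, h1⟩, rfl⟩
        exact ⟨fun z => f (x * z), ⟨⟨hf.1.comp (continuous_mul_left x),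
          hf.2.1.comp_homeomorph (Homeomorph.mulLeft x), fun z => hf.2.2 _⟩,
          fun z hz => h1 _ ⟨z, hz, rfl⟩⟩, hleft x hx f hf⟩
      · rintro _ ⟨g, ⟨hg, h1⟩, rfl⟩
        refine ⟨fun z => g (x⁻¹ * z), ⟨⟨hg.1.comp (continuous_mul_left x⁻¹),
          hg.2.1.comp_homeomorph (Homeomorph.mulLeft x⁻¹), fun z => hg.2.2 _⟩, ?_⟩, ?_⟩
        · rintro _ ⟨z, hz, rfl⟩
          simpa [inv_mul_cancel_left] using h1 z hz
        · exact hleft x⁻¹ (inv_mem hx) g hg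
    rw [hlamdef]
    simp only
    rw [himage]
  have hlam_right : ∀ x ∈ H.1, ∀ S : Set G,
      lam0 ((fun y => y * x⁻¹) '' S) = (ΔG x).toReal * lam0 S := by
    intro x hx S
    have himage : Λ '' TestFor ((fun y => y * x⁻¹) '' S)
        = (fun r => (ΔG x).toReal * r) '' (Λ '' TestFor S) := by
      apply Set.Subset.antisymm
      · rintro _ ⟨f, ⟨hf, h1⟩, rfl⟩
        have hgtest : IsTest (fun z => f (z * x⁻¹)) :=
          ⟨hf.1.comp (continuous_mul_right x⁻¹),
            hf.2.1.comp_homeomorph (Homeomorph.mulRight x⁻¹), fun z => hf.2.2 _⟩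
        refine ⟨Λ (fun z => f (z * x⁻¹)),
          ⟨fun z => f (z * x⁻¹), ⟨hgtest, fun z hz => h1 _ ⟨z, hz, rfl⟩⟩, rfl⟩, ?_⟩
        have hcomp : (fun z => (fun w => f (w * x⁻¹)) (z * x)) = f := by
          funext z; simp [mul_inv_cancel_right]
        have := hright x hx (fun z => f (z * x⁻¹)) hgtest
        rw [hcomp] at this
        exact this.symm
      · rintro _ ⟨r, ⟨g, ⟨hg, h1⟩, rfl⟩, rfl⟩
        have hftest : IsTest (fun z => g (z * x)) :=
          ⟨hg.1.comp (continuous_mul_right x),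
            hg.2.1.comp_homeomorph (Homeomorph.mulRight x), fun z => hg.2.2 _⟩
        refine ⟨fun z => g (z * x), ⟨hftest, ?_⟩, hright x hx g hg⟩
        rintro _ ⟨z, hz, rfl⟩
        simpa [inv_mul_cancel_right] using h1 z hz
    have hsmul : (fun r => (ΔG x).toReal * r) '' (Λ '' TestFor S)
        = (ΔG x).toReal • (Λ '' TestFor S) := by
      ext r
      simp [Set.mem_smul_set, smul_eq_mul, eq_comm]
    rw [hlamdef]
    simp only
    rw [himage, hsmul, Real.sInf_smul_of_nonneg ENNReal.toReal_nonneg, smul_eq_mul]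
  -- measure of translated open sets
  have hinner_left : ∀ x ∈ H.1, ∀ (U : Set G), IsOpen U →
      ν ((fun y => x * y) '' U) ≤ ν U := by
    intro x hx U hU
    rw [hν_open U hU, hν_open _ ((isOpenMap_mul_left x) U hU)]
    refine iSup₂_le fun K hK => ?_
    have hK' : ((fun y => x⁻¹ * y) '' (K : Set G)) ⊆ U := by
      rintro _ ⟨z, hz, rfl⟩
      obtain ⟨u, hu, hu'⟩ := hK hz
      rw [← hu']
      simpa [inv_mul_cancel_left] using hu
    refine le_trans (le_of_eq ?_)
      (cont.le_innerContent ⟨(fun y => x⁻¹ * y) '' (K : Set G),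
        K.2.image (continuous_mul_left x⁻¹)⟩ ⟨U, hU⟩ hK')
    rw [hcont_eval', hcont_eval']
    congr 1
    exact (hlam_left x⁻¹ (inv_mem hx) (K : Set G)).symm
  have hopen_left : ∀ x ∈ H.1, ∀ (U : Set G), IsOpen U →
      ν ((fun y => x * y) '' U) = ν U := by
    intro x hx U hU
    refine le_antisymm (hinner_left x hx U hU) ?_
    have h2 := hinner_left x⁻¹ (inv_mem hx) _ ((isOpenMap_mul_left x) U hU)
    have hcan : (fun y => x⁻¹ * y) '' ((fun y => x * y) '' U) = U := by
      rw [Set.image_image]; simp [inv_mul_cancel_left]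
    rwa [hcan] at h2
  have hinner_right : ∀ x ∈ H.1, ∀ (U : Set G), IsOpen U →
      ν ((fun y => y * x⁻¹) '' U) ≤ ΔG x * ν U := by
    intro x hx U hU
    rw [hν_open U hU, hν_open _ ((isOpenMap_mul_right x⁻¹) U hU)]
    refine iSup₂_le fun K hK => ?_
    have hK' : ((fun y => y * x) '' (K : Set G)) ⊆ U := by
      rintro _ ⟨z, hz, rfl⟩
      obtain ⟨u, hu, hu'⟩ := hK hz
      rw [← hu']
      simpa [inv_mul_cancel_right] using hu
    have heq : (cont K : ℝ≥0∞)
        = ΔG x * cont ⟨(fun y => y * x) '' (K : Set G), K.2.image (continuous_mul_right x)⟩ := by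
      rw [hcont_eval', hcont_eval']
      have hcan : ((fun y => y * x⁻¹) '' ((fun y => y * x) '' (K : Set G))) = (K : Set G) := by
        rw [Set.image_image]; simp [mul_inv_cancel_right]
      calc ENNReal.ofReal (lam0 (K : Set G))
          = ENNReal.ofReal (lam0 ((fun y => y * x⁻¹) '' ((fun y => y * x) '' (K : Set G)))) := by
            rw [hcan]
        _ = ENNReal.ofReal ((ΔG x).toReal * lam0 ((fun y => y * x) '' (K : Set G))) := by
            rw [hlam_right x hx]
        _ = ΔG x * ENNReal.ofReal (lam0 ((fun y => y * x) '' (K : Set G))) := by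
            rw [ENNReal.ofReal_mul ENNReal.toReal_nonneg, ENNReal.ofReal_toReal (hΔ x).2]
    rw [heq]
    exact mul_le_mul_right (cont.le_innerContent _ ⟨U, hU⟩ hK') _
  have hopen_right : ∀ x ∈ H.1, ∀ (U : Set G), IsOpen U →
      ν ((fun y => y * x⁻¹) '' U) = ΔG x * ν U := by
    intro x hx U hU
    refine le_antisymm (hinner_right x hx U hU) ?_
    have h2 := hinner_right x⁻¹ (inv_mem hx) _ ((isOpenMap_mul_right x⁻¹) U hU)
    have hcan : (fun y => y * x⁻¹⁻¹) '' ((fun y => y * x⁻¹) '' U) = U := by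
      rw [Set.image_image]; simp
    rw [hcan] at h2
    calc ΔG x * ν U ≤ ΔG x * (ΔG x⁻¹ * ν ((fun y => y * x⁻¹) '' U)) :=
          mul_le_mul_right h2 _
      _ = (ΔG x⁻¹ * ΔG x) * ν ((fun y => y * x⁻¹) '' U) := by ring
      _ = ν ((fun y => y * x⁻¹) '' U) := by rw [hΔinv x, one_mul]
  -- translation of arbitrary measurable sets
  have hfull_left_le : ∀ x ∈ H.1, ∀ A : Set G, MeasurableSet A →
      ν ((fun y => x * y) ⁻¹' A) ≤ ν A := by
    intro x hx A _hA
    rw [Set.measure_eq_iInf_isOpen A ν]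
    refine le_iInf fun U => le_iInf fun hAU => le_iInf fun hUo => ?_
    have hpre : (fun y => x * y) ⁻¹' U = (fun y => x⁻¹ * y) '' U := by
      ext z; constructor
      · intro hz; exact ⟨x * z, hz, by simp⟩
      · rintro ⟨u, hu, rfl⟩; simpa [mul_inv_cancel_left] using hu
    calc ν ((fun y => x * y) ⁻¹' A) ≤ ν ((fun y => x * y) ⁻¹' U) :=
          measure_mono (preimage_mono hAU)
      _ = ν ((fun y => x⁻¹ * y) '' U) := by rw [hpre]
      _ = ν U := hopen_left x⁻¹ (inv_mem hx) U hUo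
  have hfull_left : ∀ x ∈ H.1, ∀ A : Set G, MeasurableSet A →
      ν ((fun y => x * y) ⁻¹' A) = ν A := by
    intro x hx A hA
    refine le_antisymm (hfull_left_le x hx A hA) ?_
    have h2 := hfull_left_le x⁻¹ (inv_mem hx) _ ((measurable_const_mul x) hA)
    have hcan : (fun y => x⁻¹ * y) ⁻¹' ((fun y => x * y) ⁻¹' A) = A := by
      ext z; simp [mul_inv_cancel_left]
    rwa [hcan] at h2
  have haux : ∀ {a b c : ℝ≥0∞}, c ≠ 0 → c ≠ ∞ → (∀ r, b < r → a ≤ c * r) → a ≤ c * b := by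
    intro a b c hc0 hct hr
    by_contra hlt
    push_neg at hlt
    have hbfin : b ≠ ∞ := by
      intro hb
      rw [hb, ENNReal.mul_top hc0] at hlt
      exact absurd hlt (by simp)
    have hba : b < a / c := by
      rw [ENNReal.lt_div_iff_mul_lt (Or.inl hc0) (Or.inl hct), mul_comm]
      exact hlt
    obtain ⟨r, hbr, hra⟩ := exists_between hba
    have h1 := hr r hbr
    have h2 : c * r < c * (a / c) := ENNReal.mul_lt_mul_right hc0 hct hra
    have h3 : c * (a / c) ≤ a := ENNReal.mul_div_le
    exact absurd (h1.trans_lt (h2.trans_le h3)) (lt_irrefl a)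
  have hfull_right_le : ∀ x ∈ H.1, ∀ A : Set G, MeasurableSet A →
      ν ((fun y => y * x) ⁻¹' A) ≤ ΔG x * ν A := by
    intro x hx A _hA
    refine haux (hΔ x).1 (hΔ x).2 fun r hr => ?_
    obtain ⟨U, hAU, hUo, hU⟩ := Set.exists_isOpen_lt_of_lt A r hr
    have hpre : (fun y => y * x) ⁻¹' U = (fun y => y * x⁻¹) '' U := by
      ext z; constructor
      · intro hz; exact ⟨z * x, hz, by simp [mul_inv_cancel_right]⟩
      · rintro ⟨u, hu, rfl⟩; simpa [inv_mul_cancel_right] using hu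
    calc ν ((fun y => y * x) ⁻¹' A) ≤ ν ((fun y => y * x) ⁻¹' U) :=
          measure_mono (preimage_mono hAU)
      _ = ν ((fun y => y * x⁻¹) '' U) := by rw [hpre]
      _ = ΔG x * ν U := hopen_right x hx U hUo
      _ ≤ ΔG x * r := mul_le_mul_right hU.le _
  have hfull_right : ∀ x ∈ H.1, ∀ A : Set G, MeasurableSet A →
      ν ((fun y => y * x) ⁻¹' A) = ΔG x * ν A := by
    intro x hx A hA
    refine le_antisymm (hfull_right_le x hx A hA) ?_
    have h2 := hfull_right_le x⁻¹ (inv_mem hx) _ ((measurable_mul_const x) hA)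
    have hcan : (fun y => y * x⁻¹) ⁻¹' ((fun y => y * x) ⁻¹' A) = A := by
      ext z; simp [inv_mul_cancel_right]
    rw [hcan] at h2
    calc ΔG x * ν A ≤ ΔG x * (ΔG x⁻¹ * ν ((fun y => y * x) ⁻¹' A)) :=
          mul_le_mul_right h2 _
      _ = (ΔG x⁻¹ * ΔG x) * ν ((fun y => y * x) ⁻¹' A) := by ring
      _ = ν ((fun y => y * x) ⁻¹' A) := by rw [hΔinv x, one_mul]
  -- assemble
  refine ⟨ν, ?_, ?_, ?_, ?_, ?_⟩
  · have hopenc : IsOpen ((H.1 : Set G)ᶜ) := H.2.isOpen_compl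
    rw [hν_open _ hopenc]
    refine le_antisymm (iSup₂_le fun K hK => ?_) zero_le
    obtain ⟨f, hf, hf1, hfsupp, _⟩ := urysohn_test K.2 hopenc hK
    have hmem : f ∈ TestFor (K : Set G) := ⟨hf, fun z hz => (hf1 z hz).ge⟩
    have hvan : Λ f = 0 := hvanish f hf (by
      rw [Set.eq_empty_iff_forall_notMem]
      rintro z ⟨h1, h2⟩
      exact (hfsupp h1) h2)
    have hle0 : lam0 (K : Set G) ≤ 0 := hvan ▸ hlam_le hmem
    rw [hcont_eval']
    simp [ENNReal.ofReal_eq_zero.2 hle0]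
  · haveI : ν.Regular := by rw [hνdef]; exact cont.regular
    exact fun K hK => hK.measure_lt_top
  · intro x hx
    refine Measure.ext fun s hs => ?_
    rw [Measure.map_apply (measurable_const_mul x) hs]
    exact hfull_left x hx s hs
  · intro x hx
    refine Measure.ext fun s hs => ?_
    rw [Measure.map_apply (measurable_mul_const x) hs, Measure.smul_apply, smul_eq_mul]
    exact hfull_right x hx s hs
  · intro V hV
    obtain ⟨Cq, hCqc, hCqn⟩ := exists_compact_mem_nhds (1 : G)
    have hiV : interior V ∩ interior Cq ∈ 𝓝 1 :=
      Filter.inter_mem (interior_mem_nhds.2 hV) (interior_mem_nhds.2 hCqn)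
    obtain ⟨D, ⟨hDn, hDcl⟩, hDsub⟩ := (closed_nhds_basis (1 : G)).mem_iff.1 hiV
    have hDc : IsCompact D := hCqc.of_isClosed_subset hDcl
      ((hDsub.trans inter_subset_right).trans interior_subset)
    obtain ⟨c, hc0, hc⟩ := hlower D hDc hDn
    have hlamD : c ≤ lam0 D := by
      refine le_csInf (Set.Nonempty.image Λ (hTFne hDc)) ?_
      rintro r ⟨f, ⟨hf, h1⟩, rfl⟩
      exact hc f hf h1
    have hDV : D ⊆ interior V := hDsub.trans inter_subset_left
    calc (0:ℝ≥0∞) < ENNReal.ofReal c := ENNReal.ofReal_pos.2 hc0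
      _ ≤ ENNReal.ofReal (lam0 D) := ENNReal.ofReal_le_ofReal hlamD
      _ = (cont ⟨D, hDc⟩ : ℝ≥0∞) := (hcont_eval' ⟨D, hDc⟩).symm
      _ ≤ cont.innerContent ⟨interior V, isOpen_interior⟩ :=
          cont.le_innerContent ⟨D, hDc⟩ ⟨interior V, isOpen_interior⟩ hDV
      _ = ν (interior V) := (hν_open _ isOpen_interior).symm
      _ ≤ ν V := measure_mono interior_subset



lemma test_bound {f : G → ℝ} (hf : Continuous f) (hs : HasCompactSupport f) :
    ∃ c : ℝ, 0 ≤ c ∧ ∀ z, |f z| ≤ c := by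
  rcases eq_or_ne (tsupport f) ∅ with h | h
  · refine ⟨0, le_refl 0, fun z => ?_⟩
    have hz : f z = 0 := image_eq_zero_of_notMem_tsupport (by simp [h])
    simp [hz]
  · obtain ⟨x₀, hx₀, hmax⟩ := IsCompact.exists_isMaxOn hs (Set.nonempty_iff_ne_empty.2 h)
      hf.abs.continuousOn
    refine ⟨|f x₀|, abs_nonneg _, fun z => ?_⟩
    by_cases hz : z ∈ tsupport f
    · exact hmax hz
    · simp [image_eq_zero_of_notMem_tsupport hz, abs_nonneg]

lemma deltaG_inv (ℓ : Measure G) [ℓ.IsHaarMeasure] (ΔG : G → ℝ≥0∞)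
    (hΔG : ∀ g : G, Measure.map (fun x => x * g) ℓ = ΔG g • ℓ) :
    ∀ g : G, ΔG g⁻¹ * ΔG g = 1 := by
  intro g
  have hcomp : Measure.map (fun x => x * g⁻¹) (Measure.map (fun x => x * g) ℓ) = ℓ := by
    rw [Measure.map_map (measurable_mul_const g⁻¹) (measurable_mul_const g)]
    have hid : ((fun x => x * g⁻¹) ∘ fun x => x * g) = id := by
      funext x; simp [Function.comp, mul_assoc]
    rw [hid, Measure.map_id]
  rw [hΔG g, Measure.map_smul, hΔG g⁻¹] at hcomp
  obtain ⟨K₀', hK₀'c, hK₀'n⟩ := exists_compact_mem_nhds (1 : G)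
  set K := closure K₀' with hKdef
  have hKc : IsCompact K := hK₀'c.closure
  have hKn : K ∈ 𝓝 1 := Filter.mem_of_superset hK₀'n subset_closure
  have hpos : ℓ K ≠ 0 :=
    (lt_of_lt_of_le (isOpen_interior.measure_pos ℓ ⟨1, mem_interior_iff_mem_nhds.2 hKn⟩)
      (measure_mono interior_subset)).ne'
  have hfin : ℓ K ≠ ∞ := hKc.measure_lt_top.ne
  have heval := congrArg (fun μ : Measure G => μ K) hcomp
  simp only [Measure.smul_apply, smul_eq_mul] at heval
  -- heval : ΔG g * (ΔG g⁻¹ * ℓ K) = ℓ K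
  have h1 : (ΔG g⁻¹ * ΔG g) * ℓ K = 1 * ℓ K := by
    rw [one_mul, mul_comm (ΔG g⁻¹), mul_assoc]
    exact heval
  exact (ENNReal.mul_left_inj hpos hfin).1 h1

lemma deltaG_cont (ℓ : Measure G) [ℓ.IsHaarMeasure] (ΔG : G → ℝ≥0∞)
    (hΔG : ∀ g : G, Measure.map (fun x => x * g) ℓ = ΔG g • ℓ) :
    Continuous fun g => (ΔG g).toReal := by
  obtain ⟨N₀, hN₀c, hN₀n⟩ := exists_compact_mem_nhds (1 : G)
  set N := closure N₀ with hNdef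
  have hNc : IsCompact N := hN₀c.closure
  have hNn : N ∈ 𝓝 1 := Filter.mem_of_superset hN₀n subset_closure
  obtain ⟨f₁, hf₁t, hf₁1, hf₁supp, hf₁le⟩ := urysohn_test hNc isOpen_univ (subset_univ N)
  set c := ∫ z, f₁ z ∂ℓ with hcdef
  have hintN : ℓ (interior N) ≠ ∞ :=
    ((measure_mono interior_subset).trans_lt hNc.measure_lt_top).ne
  have hc_pos : 0 < c := by
    have hind : Integrable ((interior N).indicator (fun _ => (1:ℝ))) ℓ :=
      (integrable_indicator_iff isOpen_interior.measurableSet).2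
        (integrableOn_const (lt_of_le_of_ne le_top hintN).ne)
    have hf₁int : Integrable f₁ ℓ := hf₁t.1.integrable_of_hasCompactSupport hf₁t.2.1
    have hmono : ∀ z, (interior N).indicator (fun _ => (1:ℝ)) z ≤ f₁ z := by
      intro z
      by_cases hz : z ∈ interior N
      · rw [Set.indicator_of_mem hz]
        exact (hf₁1 z (interior_subset hz)).ge
      · rw [Set.indicator_of_notMem hz]
        exact hf₁t.2.2 z
    calc (0:ℝ) < (ℓ (interior N)).toReal := by
          refine ENNReal.toReal_pos ?_ hintN
          exact (isOpen_interior.measure_pos ℓ ⟨1, mem_interior_iff_mem_nhds.2 hNn⟩).ne'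
      _ = ∫ z, (interior N).indicator (fun _ => (1:ℝ)) z ∂ℓ :=
          (integral_indicator_one isOpen_interior.measurableSet).symm
      _ ≤ c := integral_mono hind hf₁int hmono
  have hrep : ∀ g, (ΔG g).toReal = (∫ z, f₁ (z * g) ∂ℓ) / c := by
    intro g
    have h1 : ∫ z, f₁ (z * g) ∂ℓ = (ΔG g).toReal * c := by
      calc ∫ z, f₁ (z * g) ∂ℓ
          = ∫ w, f₁ w ∂(Measure.map (fun x => x * g) ℓ) :=
            (integral_map (measurable_mul_const g).aemeasurable
              hf₁t.1.aestronglyMeasurable).symm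
        _ = ∫ w, f₁ w ∂(ΔG g • ℓ) := by rw [hΔG g]
        _ = (ΔG g).toReal * c := by rw [integral_smul_measure, smul_eq_mul]
    rw [h1, mul_div_cancel_right₀ _ (ne_of_gt hc_pos)]
  rw [continuous_iff_continuousAt]
  intro x
  have hfun : (fun g => (ΔG g).toReal) = fun g => (∫ z, f₁ (z * g) ∂ℓ) / c := funext hrep
  rw [hfun]
  apply ContinuousAt.div_const
  -- continuity of g ↦ ∫ f₁(z g) dℓ at x
  obtain ⟨Q₀, hQ₀c, hQ₀n⟩ := exists_compact_mem_nhds x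
  set Q := closure Q₀ with hQdef
  have hQc : IsCompact Q := hQ₀c.closure
  have hQn : Q ∈ 𝓝 x := Filter.mem_of_superset hQ₀n subset_closure
  set A := closure (tsupport f₁ * Q⁻¹) with hAdef
  have hAc : IsCompact A := (hf₁t.2.1.mul hQc.inv).closure
  have hAm : MeasurableSet A := isClosed_closure.measurableSet
  have hAfin : ℓ A < ∞ := hAc.measure_lt_top
  refine Metric.tendsto_nhds.2 fun ε hε => ?_
  set ε' := ε / (2 * ((ℓ A).toReal + 1)) with hε'def
  have hε'pos : 0 < ε' := by
    apply div_pos hε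
    positivity
  obtain ⟨V, hVn, hVQ, hVuc⟩ := unif_right hf₁t.1 hf₁t.2.1 x hε'pos hQc hQn
  filter_upwards [hVn] with y hyV
  have hsubsup : tsupport (fun z => f₁ (z * y) - f₁ (z * x)) ⊆ A := by
    refine closure_mono ?_
    intro z hz
    have : f₁ (z * y) ≠ 0 ∨ f₁ (z * x) ≠ 0 := by
      by_contra hcon
      push_neg at hcon
      simp [Function.mem_support, hcon.1, hcon.2] at hz
    rcases this with h | h
    · exact ⟨z * y, subset_tsupport _ h, y⁻¹, Set.inv_mem_inv.2 (hVQ hyV), by group⟩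
    · exact ⟨z * x, subset_tsupport _ h, x⁻¹, Set.inv_mem_inv.2 (mem_of_mem_nhds hQn), by group⟩
  have hdiffint := integral_abs_le_measure hAm hAfin hsubsup
    (c := ε') (fun z => hVuc y hyV z)
  have hint1 : Integrable (fun z => f₁ (z * y)) ℓ :=
    (hf₁t.1.comp (continuous_mul_right y)).integrable_of_hasCompactSupport
      (hf₁t.2.1.comp_homeomorph (Homeomorph.mulRight y))
  have hint2 : Integrable (fun z => f₁ (z * x)) ℓ :=
    (hf₁t.1.comp (continuous_mul_right x)).integrable_of_hasCompactSupport
      (hf₁t.2.1.comp_homeomorph (Homeomorph.mulRight x))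
  have hdist : dist (∫ z, f₁ (z * y) ∂ℓ) (∫ z, f₁ (z * x) ∂ℓ)
      = |∫ z, (f₁ (z * y) - f₁ (z * x)) ∂ℓ| := by
    rw [Real.dist_eq, integral_sub hint1 hint2]
  rw [hdist]
  calc |∫ z, (f₁ (z * y) - f₁ (z * x)) ∂ℓ| ≤ ε' * (ℓ A).toReal := hdiffint
    _ < ε := by
        rw [hε'def]
        rw [div_mul_eq_mul_div, div_lt_iff₀ (by positivity)]
        nlinarith [ENNReal.toReal_nonneg (a := ℓ A)]

set_option maxHeartbeats 2000000 in
lemma exists_goodMeas_of_mem_closure (ΔG : G → ℝ≥0∞)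
    (hΔ : ∀ g : G, ΔG g ≠ 0 ∧ ΔG g ≠ ∞) (hΔinv : ∀ g : G, ΔG g⁻¹ * ΔG g = 1)
    (hΔc : Continuous fun g => (ΔG g).toReal)
    (H : SubG G)
    (hH : H ∈ closure {J : SubG G | ∃ ν : Measure G, GoodMeas ΔG J.1 ν}) :
    ∃ ν : Measure G, GoodMeas ΔG H.1 ν := by
  classical
  set S : Set (SubG G) := {J : SubG G | ∃ ν : Measure G, GoodMeas ΔG J.1 ν} with hSdef
  obtain ⟨𝒰, hUS, hUn⟩ := mem_closure_iff_ultrafilter.1 hH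
  have hsel : ∀ J : SubG G, ∃ ν : Measure G, J ∈ S → GoodMeas ΔG J.1 ν := by
    intro J
    by_cases hJ : J ∈ S
    · obtain ⟨ν, hν⟩ := hJ
      exact ⟨ν, fun _ => hν⟩
    · exact ⟨0, fun h => absurd h hJ⟩
  choose msr hmsr using hsel
  -- subbasic neighborhoods belong to the ultrafilter
  have hmem𝒰 : ∀ (U : Set G), IsOpen U → ((H.1 : Set G) ∩ U).Nonempty →
      {J : SubG G | ((J.1 : Set G) ∩ U).Nonempty} ∈ 𝒰 :=
    fun U hU hne => hUn ((SubG.isOpen_meets hU).mem_nhds hne)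
  have hmem𝒰' : ∀ (K : Set G), IsCompact K → (H.1 : Set G) ∩ K = ∅ →
      {J : SubG G | (J.1 : Set G) ∩ K = ∅} ∈ 𝒰 :=
    fun K hK he => hUn ((SubG.isOpen_avoid hK).mem_nhds he)
  -- fixed data
  obtain ⟨N₀, hN₀c, hN₀n⟩ := exists_compact_mem_nhds (1 : G)
  set N := closure N₀ with hNdef
  have hNc : IsCompact N := hN₀c.closure
  have hNcl : IsClosed N := isClosed_closure
  have hNn : N ∈ 𝓝 1 := Filter.mem_of_superset hN₀n subset_closure
  obtain ⟨K₀, ⟨hK₀n, hK₀cl⟩, hK₀sub⟩ := (closed_nhds_basis (1 : G)).mem_iff.1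
    (interior_mem_nhds.2 hNn)
  have hK₀c : IsCompact K₀ := hNc.of_isClosed_subset hK₀cl (hK₀sub.trans interior_subset)
  obtain ⟨f₀, hf₀t, hf₀1, hf₀supp, hf₀le⟩ := urysohn_test hK₀c isOpen_interior hK₀sub
  -- integrability
  have hinteg : ∀ J ∈ S, ∀ f : G → ℝ, Continuous f → HasCompactSupport f →
      Integrable f (msr J) := by
    intro J hJ f hf hfs
    haveI : IsFiniteMeasureOnCompacts (msr J) := ⟨fun {K} hK => (hmsr J hJ).2.1 K hK⟩
    exact hf.integrable_of_hasCompactSupport hfs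
  set den : SubG G → ℝ := fun J => ∫ z, f₀ z ∂(msr J) with hdendef
  have hden : ∀ J ∈ S, 0 < den J ∧ den J ≤ (msr J N).toReal ∧
      (msr J (interior K₀)).toReal ≤ den J := by
    intro J hJ
    obtain ⟨hnull, hfin, hlinv, hrsc, hpos⟩ := hmsr J hJ
    have hKfin : msr J (interior K₀) < ∞ :=
      (measure_mono ((interior_subset).trans (hK₀sub.trans interior_subset))).trans_lt
        (hfin N hNc)
    have hind : Integrable ((interior K₀).indicator fun _ => (1:ℝ)) (msr J) :=
      (integrable_indicator_iff isOpen_interior.measurableSet).2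
        (integrableOn_const hKfin.ne)
    have hf₀int := hinteg J hJ f₀ hf₀t.1 hf₀t.2.1
    have hlow : (msr J (interior K₀)).toReal ≤ den J := by
      have hmono2 : ∀ z, (interior K₀).indicator (fun _ => (1:ℝ)) z ≤ f₀ z := by
        intro z
        by_cases hz : z ∈ interior K₀
        · rw [Set.indicator_of_mem hz]; exact (hf₀1 z (interior_subset hz)).ge
        · rw [Set.indicator_of_notMem hz]; exact hf₀t.2.2 z
      calc (msr J (interior K₀)).toReal
          = ∫ z, (interior K₀).indicator (fun _ => (1:ℝ)) z ∂(msr J) :=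
            (integral_indicator_one isOpen_interior.measurableSet).symm
        _ ≤ den J := integral_mono hind hf₀int hmono2
    have hpos' : 0 < (msr J (interior K₀)).toReal :=
      ENNReal.toReal_pos (hpos _ (interior_mem_nhds.2 hK₀n)).ne' hKfin.ne
    have hup : den J ≤ (msr J N).toReal := by
      have hNfin : msr J N < ∞ := hfin N hNc
      have hindN : Integrable (N.indicator fun _ => (1:ℝ)) (msr J) :=
        (integrable_indicator_iff hNcl.measurableSet).2
          (integrableOn_const hNfin.ne)
      have hmono2 : ∀ z, f₀ z ≤ N.indicator (fun _ => (1:ℝ)) z := by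
        intro z
        by_cases hz : z ∈ N
        · rw [Set.indicator_of_mem hz]; exact hf₀le z
        · rw [Set.indicator_of_notMem hz]
          have h0 : f₀ z = 0 := image_eq_zero_of_notMem_tsupport fun hmem =>
            hz (interior_subset (hf₀supp hmem))
          simp [h0]
      calc den J ≤ ∫ z, N.indicator (fun _ => (1:ℝ)) z ∂(msr J) :=
            integral_mono hf₀int hindN hmono2
        _ = (msr J N).toReal := integral_indicator_one hNcl.measurableSet
    exact ⟨lt_of_lt_of_le hpos' hlow, hup, hlow⟩
  -- the uniform covering bound
  have hbound : ∀ (A : Set G), IsCompact A → MeasurableSet A → ∃ m : ℝ, 0 ≤ m ∧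
      ∀ J ∈ S, (msr J A).toReal ≤ m * den J := by
    intro A hA hAm
    obtain ⟨t, W, hWo, hW1, hWs, hWW, hcov⟩ := exists_cover_data A hA
      (interior_mem_nhds.2 hK₀n)
    refine ⟨t.card, Nat.cast_nonneg _, fun J hJ => ?_⟩
    obtain ⟨hnull, hfin, hlinv, hrsc, hpos⟩ := hmsr J hJ
    obtain ⟨hden_pos, hdenN, hdenK⟩ := hden J hJ
    have hc := cov_bound hnull (fun x hx => hlinv x hx) isOpen_interior.measurableSet
      t W hWs hWW hcov
    have hKfin : msr J (interior K₀) < ∞ :=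
      (measure_mono ((interior_subset).trans (hK₀sub.trans interior_subset))).trans_lt
        (hfin N hNc)
    have h2 : (msr J A).toReal ≤ (t.card : ℝ) * (msr J (interior K₀)).toReal := by
      have hrhs : ((t.card : ℝ≥0∞) * msr J (interior K₀)) ≠ ∞ :=
        ENNReal.mul_ne_top (ENNReal.natCast_ne_top _) hKfin.ne
      have h3 := ENNReal.toReal_mono hrhs hc
      rwa [ENNReal.toReal_mul, ENNReal.toReal_natCast] at h3
    calc (msr J A).toReal ≤ (t.card : ℝ) * (msr J (interior K₀)).toReal := h2
      _ ≤ (t.card : ℝ) * den J := mul_le_mul_of_nonneg_left hdenK (Nat.cast_nonneg _)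
  set LamJ : SubG G → (G → ℝ) → ℝ := fun J f => (∫ z, f z ∂(msr J)) / den J with hLamdef
  -- existence of ultrafilter limits
  have hlim : ∀ f : G → ℝ, Continuous f → HasCompactSupport f →
      ∃ L : ℝ, Filter.Tendsto (fun J => LamJ J f) (𝒰 : Filter (SubG G)) (𝓝 L) := by
    intro f hf hfs
    obtain ⟨cf, hcf0, hcf⟩ := test_bound hf hfs
    obtain ⟨m, hm0, hmb⟩ := hbound (tsupport f) hfs (isClosed_tsupport _).measurableSet
    have hev : ∀ᶠ J in (𝒰 : Filter (SubG G)), LamJ J f ∈ Icc (-(cf * m)) (cf * m) := by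
      filter_upwards [hUS] with J hJ
      obtain ⟨hnull, hfin, hlinv, hrsc, hpos⟩ := hmsr J hJ
      obtain ⟨hden_pos, _, _⟩ := hden J hJ
      have h1 := integral_abs_le_measure (isClosed_tsupport _).measurableSet (hfin _ hfs)
        (subset_refl _) hcf
      have h2 : |LamJ J f| ≤ cf * m := by
        rw [hLamdef]
        simp only
        rw [abs_div, abs_of_pos hden_pos, div_le_iff₀ hden_pos]
        calc |∫ z, f z ∂(msr J)| ≤ cf * (msr J (tsupport f)).toReal := h1
          _ ≤ cf * (m * den J) := by nlinarith [hmb J hJ]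
          _ = cf * m * den J := by ring
      exact abs_le.1 h2
    have hle : ↑(𝒰.map fun J => LamJ J f) ≤ Filter.principal (Icc (-(cf * m)) (cf * m)) := by
      rw [Filter.le_principal_iff, Ultrafilter.coe_map, Filter.mem_map]
      exact hev
    obtain ⟨L, _, hL⟩ := isCompact_Icc.ultrafilter_le_nhds (𝒰.map fun J => LamJ J f) hle
    refine ⟨L, ?_⟩
    rw [Ultrafilter.coe_map] at hL
    exact hL
  have hlim' : ∀ f : G → ℝ, ∃ L : ℝ,
      (Continuous f ∧ HasCompactSupport f) →
        Filter.Tendsto (fun J => LamJ J f) (𝒰 : Filter (SubG G)) (𝓝 L) := by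
    intro f
    by_cases h : Continuous f ∧ HasCompactSupport f
    · obtain ⟨L, hL⟩ := hlim f h.1 h.2
      exact ⟨L, fun _ => hL⟩
    · exact ⟨0, fun hc => absurd hc h⟩
  choose Λf hΛf using hlim'
  have hT : ∀ (f : G → ℝ), Continuous f → HasCompactSupport f →
      Filter.Tendsto (fun J => LamJ J f) (𝒰 : Filter (SubG G)) (𝓝 (Λf f)) :=
    fun f hc hs => hΛf f ⟨hc, hs⟩
  -- squeeze lemma
  have hsqueeze : ∀ (g : SubG G → ℝ) (L m : ℝ), 0 ≤ m →
      Filter.Tendsto g (𝒰 : Filter (SubG G)) (𝓝 L) →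
      (∀ ε : ℝ, 0 < ε → ∀ᶠ J in (𝒰 : Filter (SubG G)), |g J| ≤ ε * m) → L = 0 := by
    intro g L m hm hg hev
    have habs : ∀ ε : ℝ, 0 < ε → |L| ≤ ε * m := fun ε hε =>
      le_of_tendsto hg.abs (hev ε hε)
    by_contra hL0
    have h0 : 0 < |L| := abs_pos.2 hL0
    have h1 := habs (|L| / (2 * (m + 1))) (by positivity)
    have hlt : |L| / (2 * (m + 1)) * m < |L| := by
      rw [div_mul_eq_mul_div, div_lt_iff₀ (by positivity)]
      nlinarith
    linarith
  -- monotonicity of the limit functional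
  have hmonofact : ∀ f g : G → ℝ, IsTest f → IsTest g → (∀ z, f z ≤ g z) → Λf f ≤ Λf g := by
    intro f g hf hg hle
    refine le_of_tendsto_of_tendsto (hT f hf.1 hf.2.1) (hT g hg.1 hg.2.1) ?_
    filter_upwards [hUS] with J hJ
    obtain ⟨hden_pos, _, _⟩ := hden J hJ
    have h1 := hinteg J hJ f hf.1 hf.2.1
    have h2 := hinteg J hJ g hg.1 hg.2.1
    have h3 := integral_mono h1 h2 hle
    rw [hLamdef]
    simp only
    exact (div_le_div_iff_of_pos_right hden_pos).2 h3
  have hzerofact : Λf 0 = 0 := by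
    have h0t : IsTest (0 : G → ℝ) :=
      ⟨continuous_const, by simp [HasCompactSupport, tsupport], fun z => le_refl 0⟩
    have hconst : (fun J => LamJ J (0 : G → ℝ)) = fun _ => (0:ℝ) := by
      funext J
      rw [hLamdef]
      simp
    have := hT 0 h0t.1 h0t.2.1
    rw [hconst] at this
    exact tendsto_nhds_unique this tendsto_const_nhds
  have haddfact : ∀ f g : G → ℝ, IsTest f → IsTest g → Λf (f + g) = Λf f + Λf g := by
    intro f g hf hg
    have hfg : IsTest (f + g) := ⟨hf.1.add hg.1, hf.2.1.add hg.2.1,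
      fun z => add_nonneg (hf.2.2 z) (hg.2.2 z)⟩
    have hev : ∀ᶠ J in (𝒰 : Filter (SubG G)), LamJ J (f + g) = LamJ J f + LamJ J g := by
      filter_upwards [hUS] with J hJ
      rw [hLamdef]
      simp only [Pi.add_apply]
      rw [integral_add (hinteg J hJ f hf.1 hf.2.1) (hinteg J hJ g hg.1 hg.2.1), add_div]
    exact tendsto_nhds_unique (hT _ hfg.1 hfg.2.1)
      (Filter.Tendsto.congr' (hev.mono fun J h => h.symm)
        ((hT f hf.1 hf.2.1).add (hT g hg.1 hg.2.1)))
  have hvanishfact : ∀ f : G → ℝ, IsTest f → tsupport f ∩ (H.1 : Set G) = ∅ → Λf f = 0 := by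
    intro f hf hdis
    have hHK : (H.1 : Set G) ∩ tsupport f = ∅ := by rw [Set.inter_comm]; exact hdis
    have hev : ∀ᶠ J in (𝒰 : Filter (SubG G)), LamJ J f = 0 := by
      filter_upwards [hmem𝒰' (tsupport f) hf.2.1 hHK, hUS] with J hJK hJS
      obtain ⟨hnull, hfin, hlinv, hrsc, hpos⟩ := hmsr J hJS
      have h0 : msr J (tsupport f) = 0 := by
        refine measure_mono_null ?_ hnull
        intro z hz hzJ
        rw [Set.eq_empty_iff_forall_notMem] at hJK
        exact hJK z ⟨hzJ, hz⟩
      have hae : f =ᵐ[msr J] 0 := by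
        rw [Filter.EventuallyEq, ae_iff]
        refine measure_mono_null (fun z hz => subset_tsupport f ?_) h0
        simpa using hz
      rw [hLamdef]
      simp only
      rw [integral_eq_zero_of_ae hae, zero_div]
    exact tendsto_nhds_unique (hT f hf.1 hf.2.1)
      (Filter.Tendsto.congr' (hev.mono fun J h => h.symm) tendsto_const_nhds)
  -- left invariance of the limit functional
  have hleftfact : ∀ x ∈ H.1, ∀ f : G → ℝ, IsTest f → Λf (fun z => f (x * z)) = Λf f := by
    intro x hx f hf
    obtain ⟨hfc, hfs, hfnn⟩ := hf
    have hxtc : Continuous fun z => f (x * z) := hfc.comp (continuous_mul_left x)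
    have hxts : HasCompactSupport fun z => f (x * z) :=
      hfs.comp_homeomorph (Homeomorph.mulLeft x)
    obtain ⟨Q₀, hQ₀c, hQ₀n⟩ := exists_compact_mem_nhds x
    set Q := closure Q₀ with hQdef
    have hQc : IsCompact Q := hQ₀c.closure
    have hQn : Q ∈ 𝓝 x := Filter.mem_of_superset hQ₀n subset_closure
    set A := closure (Q⁻¹ * tsupport f) with hAdef
    have hAc : IsCompact A := (hQc.inv.mul hfs).closure
    have hAm : MeasurableSet A := isClosed_closure.measurableSet
    obtain ⟨m, hm0, hmb⟩ := hbound A hAc hAm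
    have hdiff : Filter.Tendsto (fun J => LamJ J (fun z => f (x * z)) - LamJ J f)
        (𝒰 : Filter (SubG G)) (𝓝 (Λf (fun z => f (x * z)) - Λf f)) :=
      (hT _ hxtc hxts).sub (hT f hfc hfs)
    have hev : ∀ ε : ℝ, 0 < ε → ∀ᶠ J in (𝒰 : Filter (SubG G)),
        |LamJ J (fun z => f (x * z)) - LamJ J f| ≤ ε * m := by
      intro ε hε
      obtain ⟨V, hVn, hVQ, hVuc⟩ := unif_left hfc hfs x hε hQc hQn
      have hxV : x ∈ interior V := mem_interior_iff_mem_nhds.2 hVn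
      filter_upwards [hmem𝒰 (interior V) isOpen_interior ⟨x, hx, hxV⟩, hUS] with J hJV hJS
      obtain ⟨y, hyJ, hyV⟩ := hJV
      obtain ⟨hnull, hfin, hlinv, hrsc, hpos⟩ := hmsr J hJS
      obtain ⟨hden_pos, _, _⟩ := hden J hJS
      have h1 : ∫ z, f (y * z) ∂(msr J) = ∫ z, f z ∂(msr J) := by
        conv_rhs => rw [← hlinv y hyJ]
        rw [integral_map (measurable_const_mul y).aemeasurable hfc.aestronglyMeasurable]
      set g : G → ℝ := fun z => f (x * z) - f (y * z) with hgdef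
      have hysQ : y ∈ Q := hVQ (interior_subset hyV)
      have hxQ : x ∈ Q := mem_of_mem_nhds hQn
      have hsupg : tsupport g ⊆ A := by
        refine closure_mono ?_
        intro z hz
        have hne : f (x * z) ≠ 0 ∨ f (y * z) ≠ 0 := by
          by_contra hcon
          push_neg at hcon
          simp [hgdef, Function.mem_support, hcon.1, hcon.2] at hz
        rcases hne with h | h
        · exact ⟨x⁻¹, Set.inv_mem_inv.2 hxQ, x * z, subset_tsupport _ h, by group⟩
        · exact ⟨y⁻¹, Set.inv_mem_inv.2 hysQ, y * z, subset_tsupport _ h, by group⟩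
      have hgbd : ∀ z, |g z| ≤ ε := by
        intro z
        rw [hgdef]
        simpa [abs_sub_comm] using hVuc y (interior_subset hyV) z
      have hintg := integral_abs_le_measure hAm (hfin A hAc) hsupg hgbd
      have hint1 := hinteg J hJS _ hxtc hxts
      have hint2 := hinteg J hJS _ (hfc.comp (continuous_mul_left y))
        (hfs.comp_homeomorph (Homeomorph.mulLeft y))
      have hsplit : ∫ z, g z ∂(msr J)
          = (∫ z, f (x * z) ∂(msr J)) - ∫ z, f (y * z) ∂(msr J) :=
        integral_sub hint1 hint2
      have hcalc : LamJ J (fun z => f (x * z)) - LamJ J f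
          = (∫ z, g z ∂(msr J)) / den J := by
        rw [hLamdef]
        simp only
        rw [hsplit, h1, sub_div]
      rw [hcalc, abs_div, abs_of_pos hden_pos, div_le_iff₀ hden_pos]
      calc |∫ z, g z ∂(msr J)| ≤ ε * (msr J A).toReal := hintg
        _ ≤ ε * (m * den J) := by nlinarith [hmb J hJS]
        _ = ε * m * den J := by ring
    exact sub_eq_zero.1 (hsqueeze _ _ m hm0 hdiff hev)
  -- right scaling of the limit functional
  have hrightfact : ∀ x ∈ H.1, ∀ f : G → ℝ, IsTest f →
      Λf (fun z => f (z * x)) = (ΔG x).toReal * Λf f := by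
    intro x hx f hf
    obtain ⟨hfc, hfs, hfnn⟩ := hf
    have hxtc : Continuous fun z => f (z * x) := hfc.comp (continuous_mul_right x)
    have hxts : HasCompactSupport fun z => f (z * x) :=
      hfs.comp_homeomorph (Homeomorph.mulRight x)
    obtain ⟨Q₀, hQ₀c, hQ₀n⟩ := exists_compact_mem_nhds x
    set Q := closure Q₀ with hQdef
    have hQc : IsCompact Q := hQ₀c.closure
    have hQn : Q ∈ 𝓝 x := Filter.mem_of_superset hQ₀n subset_closure
    set A := closure (tsupport f * Q⁻¹) with hAdef
    have hAc : IsCompact A := (hfs.mul hQc.inv).closure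
    have hAm : MeasurableSet A := isClosed_closure.measurableSet
    obtain ⟨m, hm0, hmb⟩ := hbound A hAc hAm
    obtain ⟨mf, hmf0, hmfb⟩ := hbound (tsupport f) hfs (isClosed_tsupport _).measurableSet
    obtain ⟨cf, hcf0, hcf⟩ := test_bound hfc hfs
    have hBf : ∀ J ∈ S, |LamJ J f| ≤ cf * mf := by
      intro J hJ
      obtain ⟨hnull, hfin, hlinv, hrsc, hpos⟩ := hmsr J hJ
      obtain ⟨hden_pos, _, _⟩ := hden J hJ
      have h1 := integral_abs_le_measure (isClosed_tsupport _).measurableSet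
        (hfin _ hfs) (subset_refl _) hcf
      rw [hLamdef]
      simp only
      rw [abs_div, abs_of_pos hden_pos, div_le_iff₀ hden_pos]
      calc |∫ z, f z ∂(msr J)| ≤ cf * (msr J (tsupport f)).toReal := h1
        _ ≤ cf * (mf * den J) := by nlinarith [hmfb J hJ]
        _ = cf * mf * den J := by ring
    set B := cf * mf + m with hBdef
    have hB0 : 0 ≤ B := by
      rw [hBdef]
      have := mul_nonneg hcf0 hmf0
      linarith
    have hdiff : Filter.Tendsto
        (fun J => LamJ J (fun z => f (z * x)) - (ΔG x).toReal * LamJ J f)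
        (𝒰 : Filter (SubG G))
        (𝓝 (Λf (fun z => f (z * x)) - (ΔG x).toReal * Λf f)) :=
      (hT _ hxtc hxts).sub ((hT f hfc hfs).const_mul _)
    have hev : ∀ ε : ℝ, 0 < ε → ∀ᶠ J in (𝒰 : Filter (SubG G)),
        |LamJ J (fun z => f (z * x)) - (ΔG x).toReal * LamJ J f| ≤ ε * B := by
      intro ε hε
      obtain ⟨V, hVn, hVQ, hVuc⟩ := unif_right hfc hfs x hε hQc hQn
      have hδ : {y : G | |(ΔG y).toReal - (ΔG x).toReal| ≤ ε} ∈ 𝓝 x := by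
        have hco := hΔc.continuousAt (x := x) (Metric.closedBall_mem_nhds ((ΔG x).toReal) hε)
        refine Filter.mem_of_superset hco ?_
        intro y hy
        simpa [Metric.mem_closedBall, Real.dist_eq] using hy
      have hVδ : V ∩ {y : G | |(ΔG y).toReal - (ΔG x).toReal| ≤ ε} ∈ 𝓝 x :=
        Filter.inter_mem hVn hδ
      have hxmem : x ∈ interior (V ∩ {y : G | |(ΔG y).toReal - (ΔG x).toReal| ≤ ε}) :=
        mem_interior_iff_mem_nhds.2 hVδ
      filter_upwards [hmem𝒰 _ isOpen_interior ⟨x, hx, hxmem⟩, hUS] with J hJV hJS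
      obtain ⟨y, hyJ, hyVδ⟩ := hJV
      have hyV : y ∈ V := (interior_subset hyVδ).1
      have hyδ : |(ΔG y).toReal - (ΔG x).toReal| ≤ ε := (interior_subset hyVδ).2
      obtain ⟨hnull, hfin, hlinv, hrsc, hpos⟩ := hmsr J hJS
      obtain ⟨hden_pos, _, _⟩ := hden J hJS
      have h1 : ∫ z, f (z * y) ∂(msr J) = (ΔG y).toReal * ∫ z, f z ∂(msr J) := by
        have h2 : ∫ z, f (z * y) ∂(msr J)
            = ∫ w, f w ∂(Measure.map (fun z => z * y) (msr J)) :=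
          (integral_map (measurable_mul_const y).aemeasurable hfc.aestronglyMeasurable).symm
        rw [h2, hrsc y hyJ, integral_smul_measure, smul_eq_mul]
      set g : G → ℝ := fun z => f (z * x) - f (z * y) with hgdef
      have hysQ : y ∈ Q := hVQ hyV
      have hxQ : x ∈ Q := mem_of_mem_nhds hQn
      have hsupg : tsupport g ⊆ A := by
        refine closure_mono ?_
        intro z hz
        have hne : f (z * x) ≠ 0 ∨ f (z * y) ≠ 0 := by
          by_contra hcon
          push_neg at hcon
          simp [hgdef, Function.mem_support, hcon.1, hcon.2] at hz
        rcases hne with h | h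
        · exact ⟨z * x, subset_tsupport _ h, x⁻¹, Set.inv_mem_inv.2 hxQ, by group⟩
        · exact ⟨z * y, subset_tsupport _ h, y⁻¹, Set.inv_mem_inv.2 hysQ, by group⟩
      have hgbd : ∀ z, |g z| ≤ ε := by
        intro z
        rw [hgdef]
        simpa [abs_sub_comm] using hVuc y hyV z
      have hintg := integral_abs_le_measure hAm (hfin A hAc) hsupg hgbd
      have hint1 := hinteg J hJS _ hxtc hxts
      have hint2 := hinteg J hJS _ (hfc.comp (continuous_mul_right y))
        (hfs.comp_homeomorph (Homeomorph.mulRight y))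
      have hsplit : ∫ z, g z ∂(msr J)
          = (∫ z, f (z * x) ∂(msr J)) - ∫ z, f (z * y) ∂(msr J) :=
        integral_sub hint1 hint2
      have hLam_eq : LamJ J (fun z => f (z * x)) - (ΔG x).toReal * LamJ J f
          = (∫ z, g z ∂(msr J)) / den J
            + ((ΔG y).toReal - (ΔG x).toReal) * LamJ J f := by
        rw [hLamdef]
        simp only
        rw [hsplit, h1]
        field_simp
        ring
      rw [hLam_eq]
      have hterm1 : |(∫ z, g z ∂(msr J)) / den J| ≤ ε * m := by
        rw [abs_div, abs_of_pos hden_pos, div_le_iff₀ hden_pos]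
        calc |∫ z, g z ∂(msr J)| ≤ ε * (msr J A).toReal := hintg
          _ ≤ ε * (m * den J) := by nlinarith [hmb J hJS]
          _ = ε * m * den J := by ring
      have hterm2 : |((ΔG y).toReal - (ΔG x).toReal) * LamJ J f| ≤ ε * (cf * mf) := by
        rw [abs_mul]
        exact mul_le_mul hyδ (hBf J hJS) (abs_nonneg _) hε.le
      calc |(∫ z, g z ∂(msr J)) / den J + ((ΔG y).toReal - (ΔG x).toReal) * LamJ J f|
          ≤ |(∫ z, g z ∂(msr J)) / den J|
            + |((ΔG y).toReal - (ΔG x).toReal) * LamJ J f| := abs_add_le _ _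
        _ ≤ ε * m + ε * (cf * mf) := add_le_add hterm1 hterm2
        _ = ε * B := by rw [hBdef]; ring
    exact sub_eq_zero.1 (hsqueeze _ _ B hB0 hdiff hev)
  -- lower bound on small neighborhoods
  have hlowerfact : ∀ C : Set G, IsCompact C → C ∈ 𝓝 1 →
      ∃ c : ℝ, 0 < c ∧ ∀ f : G → ℝ, IsTest f → (∀ z ∈ C, 1 ≤ f z) → c ≤ Λf f := by
    intro C hC hCn
    obtain ⟨D, ⟨hDn, hDcl⟩, hDsub⟩ := (closed_nhds_basis (1 : G)).mem_iff.1
      (interior_mem_nhds.2 hCn)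
    have hDc : IsCompact D := hC.of_isClosed_subset hDcl (hDsub.trans interior_subset)
    obtain ⟨f', hf't, hf'1, hf'supp, hf'le⟩ := urysohn_test hDc isOpen_interior hDsub
    obtain ⟨t, W, hWo, hW1, hWs, hWW, hcov⟩ := exists_cover_data N hNc
      (interior_mem_nhds.2 hDn)
    set m' : ℝ := t.card + 1 with hm'def
    have hm'pos : 0 < m' := by positivity
    have hkey : ∀ J ∈ S, 1 / m' ≤ LamJ J f' := by
      intro J hJ
      obtain ⟨hnull, hfin, hlinv, hrsc, hpos⟩ := hmsr J hJ
      obtain ⟨hden_pos, hdenN, hdenK⟩ := hden J hJ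
      have hc := cov_bound hnull (fun a ha => hlinv a ha) isOpen_interior.measurableSet
        t W hWs hWW hcov
      set a : ℝ := (msr J (interior D)).toReal with hadef
      have hDfin : msr J (interior D) < ∞ :=
        (measure_mono ((interior_subset).trans (hDsub.trans interior_subset))).trans_lt
          (hfin C hC)
      have hapos : 0 < a :=
        ENNReal.toReal_pos (hpos _ (interior_mem_nhds.2 hDn)).ne' hDfin.ne
      have hdenle : den J ≤ m' * a := by
        have h2 : (msr J N).toReal ≤ (t.card : ℝ) * a := by
          have hrhs : ((t.card : ℝ≥0∞) * msr J (interior D)) ≠ ∞ :=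
            ENNReal.mul_ne_top (ENNReal.natCast_ne_top _) hDfin.ne
          have h3 := ENNReal.toReal_mono hrhs hc
          rwa [ENNReal.toReal_mul, ENNReal.toReal_natCast] at h3
        calc den J ≤ (msr J N).toReal := hdenN
          _ ≤ (t.card : ℝ) * a := h2
          _ ≤ m' * a := by rw [hm'def]; nlinarith
      have hintf' : a ≤ ∫ z, f' z ∂(msr J) := by
        have hind : Integrable ((interior D).indicator fun _ => (1:ℝ)) (msr J) :=
          (integrable_indicator_iff isOpen_interior.measurableSet).2
            (integrableOn_const hDfin.ne)
        have hmono2 : ∀ z, (interior D).indicator (fun _ => (1:ℝ)) z ≤ f' z := by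
          intro z
          by_cases hz : z ∈ interior D
          · rw [Set.indicator_of_mem hz]; exact (hf'1 z (interior_subset hz)).ge
          · rw [Set.indicator_of_notMem hz]; exact hf't.2.2 z
        calc a = ∫ z, (interior D).indicator (fun _ => (1:ℝ)) z ∂(msr J) :=
              (integral_indicator_one isOpen_interior.measurableSet).symm
          _ ≤ _ := integral_mono hind (hinteg J hJ f' hf't.1 hf't.2.1) hmono2
      rw [hLamdef]
      simp only
      rw [div_le_div_iff₀ hm'pos hden_pos]
      calc 1 * den J = den J := one_mul _
        _ ≤ m' * a := hdenle
        _ ≤ m' * ∫ z, f' z ∂(msr J) := by nlinarith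
        _ = (∫ z, f' z ∂(msr J)) * m' := mul_comm _ _
    refine ⟨1 / m', by positivity, fun f hf h1 => ?_⟩
    have hge : ∀ z, f' z ≤ f z := by
      intro z
      by_cases hz : z ∈ C
      · exact (hf'le z).trans (h1 z hz)
      · have h0 : f' z = 0 := image_eq_zero_of_notMem_tsupport fun hmem =>
          hz (interior_subset (hf'supp hmem))
        rw [h0]; exact hf.2.2 z
    have h2 : Λf f' ≤ Λf f := hmonofact f' f hf't hf hge
    have h3 : 1 / m' ≤ Λf f' := ge_of_tendsto (hT f' hf't.1 hf't.2.1)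
      (by filter_upwards [hUS] with J hJ; exact hkey J hJ)
    linarith
  exact goodMeas_of_functional ΔG hΔ hΔinv H Λf hmonofact hzerofact haddfact hvanishfact
    hleftfact hrightfact hlowerfact

end Aux

/-- **Closedness of the set of subgroups with invariant quotient measure.**
Let `G` be a locally compact second countable group with left Haar measure `ℓ` and modular
function `Δ_G` (characterized by `(·* g)_* ℓ = Δ_G(g) • ℓ`).  The set of closed subgroups
`H` of `G` such that `Δ_G` restricted to `H` is the modular function of `H` (i.e. some left
Haar measure of `H` has modular function `Δ_G|_H`; equivalently `G/H` carries a nonzero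
`G`-invariant measure) is closed in the Chabauty topology. -/
theorem isClosed_subgroups_with_matching_modular_function
    {G : Type*} [Group G] [TopologicalSpace G] [IsTopologicalGroup G]
    [LocallyCompactSpace G] [SecondCountableTopology G]
    [MeasurableSpace G] [BorelSpace G]
    (ℓ : Measure G) [ℓ.IsHaarMeasure]
    (ΔG : G → ℝ≥0∞) (hΔG : ∀ g : G, Measure.map (fun x => x * g) ℓ = ΔG g • ℓ) :
    IsClosed {H : SubG G | ∃ μ : Measure ↥H.1, μ.IsHaarMeasure ∧
      ∀ h : ↥H.1, Measure.map (fun x => x * h) μ = ΔG (h : G) • μ} := by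
  have hΔ := deltaG_facts ℓ ΔG hΔG
  have hΔi := deltaG_inv ℓ ΔG hΔG
  have hΔc := deltaG_cont ℓ ΔG hΔG
  have hset : {H : SubG G | ∃ μ : Measure ↥H.1, μ.IsHaarMeasure ∧
      ∀ h : ↥H.1, Measure.map (fun x => x * h) μ = ΔG (h : G) • μ}
      = {J : SubG G | ∃ ν : Measure G, GoodMeas ΔG J.1 ν} := by
    ext J
    constructor
    · exact goodMeas_of_exists_haar ΔG J
    · rintro ⟨ν, hν⟩
      exact exists_haar_of_goodMeas ΔG J ν hν
  rw [hset]
  exact isClosed_of_closure_subset fun J hJ =>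
    exists_goodMeas_of_mem_closure ΔG hΔ hΔi hΔc J hJ
end
end

section
/- Let G be a locally compact second countable group acting measurably on a standard Borel space X. Then for every x ∈ X the stabilizer G_x = {g ∈ G : gx = x} is a closed subgroup of G, and the map x ↦ G_x from X to the Chabauty space of closed subgroups of G is Borel measurable. -/
open MeasureTheory Topology
open scoped ENNReal

noncomputable section

open MeasureTheory Topology Filter Set
open scoped ENNReal NNReal Pointwise

namespace StabAux

variable {G : Type*} [Group G] [TopologicalSpace G] [IsTopologicalGroup G]
    [LocallyCompactSpace G] [SecondCountableTopology G]
    [MeasurableSpace G] [BorelSpace G]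
    {X : Type*} [MeasurableSpace X] [MulAction G X]

variable (q : X → ℝ) (ν : Measure G) (C : Set G)

/-- The key integral functional. -/
def Phi (x : X) (k : G) : ℝ≥0∞ :=
  ∫⁻ h in C, (‖q ((h * k) • x) - q (h • x)‖₊ : ℝ≥0∞) ∂ν

/-- Distance-like comparison functional. -/
def Tt (x : X) (a b : G) : ℝ≥0∞ :=
  ∫⁻ h in C, (‖q ((h * b) • x) - q ((h * a) • x)‖₊ : ℝ≥0∞) ∂ν

variable {q}

set_option linter.unusedSectionVars false

section Meas

variable (hq : Measurable q)
include hq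
variable (hact : Measurable fun p : G × X => p.1 • p.2)
include hact

lemma measF (k : G) : Measurable fun p : X × G => q ((p.2 * k) • p.1) := by
  have : (fun p : X × G => q ((p.2 * k) • p.1))
      = (fun p : G × X => q (p.1 • p.2)) ∘ (fun p : X × G => (p.2 * k, p.1)) := rfl
  rw [this]
  exact (hq.comp hact) |>.comp ((measurable_snd.mul_const k).prodMk measurable_fst)

lemma measF1 (x : X) (k : G) : Measurable fun h : G => q ((h * k) • x) :=
  (measF hq hact k).comp (measurable_const.prodMk measurable_id)

lemma meas_kern (x : X) (a b : G) :
    Measurable fun h : G => (‖q ((h * b) • x) - q ((h * a) • x)‖₊ : ℝ≥0∞) :=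
  ((measF1 hq hact x b).sub (measF1 hq hact x a)).nnnorm.coe_nnreal_ennreal

lemma meas_kern' (x : X) (k : G) :
    Measurable fun h : G => (‖q ((h * k) • x) - q (h • x)‖₊ : ℝ≥0∞) := by
  have h1 : (fun h : G => q (h • x)) = fun h : G => q ((h * 1) • x) := by
    funext h; rw [mul_one]
  exact ((measF1 hq hact x k).sub (by rw [h1]; exact measF1 hq hact x 1)).nnnorm.coe_nnreal_ennreal

lemma measurable_Phi (k : G) [SFinite ν] : Measurable fun x : X => Phi q ν C x k := by
  apply Measurable.lintegral_prod_right (f := fun (x : X) (h : G) =>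
    (‖q ((h * k) • x) - q (h • x)‖₊ : ℝ≥0∞))
  apply Measurable.coe_nnreal_ennreal
  apply Measurable.nnnorm
  refine (measF hq hact k).sub ?_
  exact (hq.comp hact).comp (measurable_snd.prodMk measurable_fst)

end Meas

lemma tt_symm (x : X) (a b : G) : Tt q ν C x a b = Tt q ν C x b a := by
  unfold Tt
  congr 1; funext h
  rw [show q ((h * b) • x) - q ((h * a) • x) = -(q ((h * a) • x) - q ((h * b) • x)) by ring,
    nnnorm_neg]

lemma phi_le (hq : Measurable q) (hact : Measurable fun p : G × X => p.1 • p.2) (x : X) (a b : G) :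
    Phi q ν C x b ≤ Phi q ν C x a + Tt q ν C x a b := by
  unfold Phi Tt
  rw [← lintegral_add_left (by exact (meas_kern' hq hact x a))]
  refine lintegral_mono fun h => ?_
  have tri : ‖q ((h * b) • x) - q (h • x)‖₊
      ≤ ‖q ((h * a) • x) - q (h • x)‖₊ + ‖q ((h * b) • x) - q ((h * a) • x)‖₊ := by
    simp only [← nndist_eq_nnnorm]
    exact (nndist_triangle _ _ _).trans (by rw [add_comm])
  calc (‖q ((h * b) • x) - q (h • x)‖₊ : ℝ≥0∞) ≤ ((‖q ((h * a) • x) - q (h • x)‖₊ + ‖q ((h * b) • x) - q ((h * a) • x)‖₊ : ℝ≥0) : ℝ≥0∞) := ENNReal.coe_le_coe.mpr tri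
    _ = _ := by rw [ENNReal.coe_add]

variable {ν C}

lemma phi_zero_iff (hq : Measurable q) (hact : Measurable fun p : G × X => p.1 • p.2)
    (hqi : Function.Injective q) (hCm : MeasurableSet C) (hCpos : 0 < ν C)
    (x : X) (k : G) : Phi q ν C x k = 0 ↔ k • x = x := by
  constructor
  · intro h0
    by_contra hk
    have hne : ∀ h : G, (‖q ((h * k) • x) - q (h • x)‖₊ : ℝ≥0∞) ≠ 0 := by
      intro h
      simp only [ne_eq, ENNReal.coe_eq_zero, nnnorm_eq_zero, sub_eq_zero]
      intro heq
      apply hk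
      have := hqi heq
      rw [mul_smul] at this
      exact (MulAction.injective h) (this.trans (rfl))
    rw [Phi, lintegral_eq_zero_iff (meas_kern' hq hact x k)] at h0
    have : ∀ᵐ h ∂(ν.restrict C), False := by
      filter_upwards [h0] with h hh
      exact hne h hh
    rw [ae_iff] at this
    simp only [not_false_eq_true, setOf_true] at this
    rw [Measure.restrict_apply_univ] at this
    exact absurd this hCpos.ne'
  · intro hk
    rw [Phi]
    have : ∀ h : G, (‖q ((h * k) • x) - q (h • x)‖₊ : ℝ≥0∞) = 0 := by
      intro h
      simp only [ENNReal.coe_eq_zero, nnnorm_eq_zero, sub_eq_zero]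
      rw [mul_smul, hk]
    simp only [this, lintegral_zero]


section Tendsto

variable [ν.IsMulRightInvariant] [ν.Regular] [IsFiniteMeasureOnCompacts ν]

lemma psi_tendsto (hq : Measurable q) (hqb : ∀ y, ‖q y‖ ≤ 2)
    (hact : Measurable fun p : G × X => p.1 • p.2) (x : X)
    {C₂ : Set G} (hC₂c : IsCompact C₂) (hC₂m : MeasurableSet C₂) :
    Tendsto (fun s : G => ∫⁻ h in C₂, (‖q ((h * s) • x) - q (h • x)‖₊ : ℝ≥0∞) ∂ν)
      (𝓝 1) (𝓝 0) := by
  rw [ENNReal.tendsto_nhds_zero]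
  intro ε hε
  obtain ⟨U, hUc, hUn⟩ := exists_compact_mem_nhds (1 : G)
  set C₃ : Set G := closure (C₂ * U) with hC₃def
  have hC₃c : IsCompact C₃ := (hC₂c.mul hUc).closure
  have hC₃cl : IsClosed C₃ := isClosed_closure
  have hC₃m : MeasurableSet C₃ := hC₃cl.measurableSet
  have hsub : ∀ h ∈ C₂, ∀ s ∈ U, h * s ∈ C₃ := fun h hh s hs =>
    subset_closure (mul_mem_mul hh hs)
  have hsub2 : C₂ ⊆ C₃ := fun h hh => by
    simpa using hsub h hh 1 (mem_of_mem_nhds hUn)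
  set Fb : G → ℝ := C₃.indicator (fun h => q (h • x)) with hFbdef
  have hFx : Measurable fun h : G => q (h • x) :=
    (hq.comp hact).comp (measurable_id.prodMk measurable_const)
  have hFbm : Measurable Fb := hFx.indicator hC₃m
  have hmem : MemLp Fb 1 ν := by
    rw [memLp_one_iff_integrable, integrable_indicator_iff hC₃m]
    refine Measure.integrableOn_of_bounded hC₃c.measure_lt_top.ne
      hFx.aestronglyMeasurable (M := 2) ?_
    filter_upwards with h using hqb _
  have hε3 : ε / 3 ≠ 0 := by
    simp only [ne_eq, ENNReal.div_eq_zero_iff]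
    push_neg
    exact ⟨hε.ne', by norm_num⟩
  obtain ⟨g, hgsupp, hgnorm, hgcont, _⟩ :=
    hmem.exists_hasCompactSupport_eLpNorm_sub_le (ENNReal.one_ne_top) hε3
  rw [eLpNorm_one_eq_lintegral_enorm] at hgnorm
  have hgm : Measurable g := hgcont.measurable
  obtain ⟨M, hM⟩ := hgsupp.exists_bound_of_continuous hgcont
  -- term2 tendsto 0
  have h2 : Tendsto (fun s : G => ∫⁻ h in C₂, (‖g (h * s) - g h‖₊ : ℝ≥0∞) ∂ν)
      (𝓝 1) (𝓝 0) := by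
    have h0 : (0 : ℝ≥0∞) = ∫⁻ _ in C₂, (0 : ℝ≥0∞) ∂ν := by simp
    rw [h0]
    refine tendsto_lintegral_filter_of_dominated_convergence
      (fun _ => (2 * Real.toNNReal M : ℝ≥0∞)) ?_ ?_ ?_ ?_
    · filter_upwards with s
      exact ((hgm.comp (measurable_mul_const s)).sub hgm).nnnorm.coe_nnreal_ennreal
    · filter_upwards with s
      filter_upwards with h
      have b1 : ∀ y : G, (‖g y‖₊ : ℝ≥0∞) ≤ Real.toNNReal M := by
        intro y
        rw [ENNReal.coe_le_coe, ← Real.toNNReal_coe (r := ‖g y‖₊)]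
        exact Real.toNNReal_mono (by simpa using hM y)
      calc (‖g (h * s) - g h‖₊ : ℝ≥0∞) ≤ (‖g (h * s)‖₊ : ℝ≥0∞) + ‖g h‖₊ := by
            rw [← ENNReal.coe_add]; exact ENNReal.coe_le_coe.mpr (nnnorm_sub_le _ _)
        _ ≤ Real.toNNReal M + Real.toNNReal M := add_le_add (b1 _) (b1 _)
        _ = 2 * Real.toNNReal M := (two_mul _).symm
    · rw [lintegral_const, Measure.restrict_apply_univ]
      exact ENNReal.mul_ne_top (ENNReal.mul_ne_top (by simp) ENNReal.coe_ne_top)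
        hC₂c.measure_lt_top.ne
    · filter_upwards with h
      have hc : Continuous fun s : G => (‖g (h * s) - g h‖₊ : ℝ≥0∞) :=
        ENNReal.continuous_coe.comp
          (((hgcont.comp (continuous_mul_left h)).sub continuous_const).nnnorm)
      have := hc.tendsto 1
      simpa using this
  have h2' := (ENNReal.tendsto_nhds_zero.mp h2) (ε / 3)
    (pos_iff_ne_zero.mpr hε3)
  filter_upwards [hUn, h2'] with s hsU h2s
  -- pointwise triangle inequality on C₂
  have tri : ∀ h ∈ C₂, (‖q ((h * s) • x) - q (h • x)‖₊ : ℝ≥0∞)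
      ≤ (‖Fb (h * s) - g (h * s)‖₊ : ℝ≥0∞) + (‖g (h * s) - g h‖₊ : ℝ≥0∞)
        + (‖g h - Fb h‖₊ : ℝ≥0∞) := by
    intro h hh
    have e1 : q ((h * s) • x) = Fb (h * s) := by
      rw [hFbdef]; exact (indicator_of_mem (hsub h hh s hsU) (fun h => q (h • x))).symm
    have e2 : q (h • x) = Fb h := by
      rw [hFbdef]; exact (indicator_of_mem (hsub2 hh) (fun h => q (h • x))).symm
    rw [e1, e2, ← ENNReal.coe_add, ← ENNReal.coe_add, ENNReal.coe_le_coe,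
      ← nndist_eq_nnnorm, ← nndist_eq_nnnorm, ← nndist_eq_nnnorm, ← nndist_eq_nnnorm]
    exact (nndist_triangle _ (g h) _).trans
      (add_le_add_left (nndist_triangle _ (g (h * s)) _) _)
  calc ∫⁻ h in C₂, (‖q ((h * s) • x) - q (h • x)‖₊ : ℝ≥0∞) ∂ν
      ≤ ∫⁻ h in C₂, ((‖Fb (h * s) - g (h * s)‖₊ : ℝ≥0∞) + (‖g (h * s) - g h‖₊ : ℝ≥0∞)
        + (‖g h - Fb h‖₊ : ℝ≥0∞)) ∂ν := by
        refine lintegral_mono_ae ?_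
        rw [ae_restrict_iff' hC₂m]
        filter_upwards with h hh using tri h hh
    _ = (∫⁻ h in C₂, (‖Fb (h * s) - g (h * s)‖₊ : ℝ≥0∞) ∂ν)
        + (∫⁻ h in C₂, (‖g (h * s) - g h‖₊ : ℝ≥0∞) ∂ν)
        + (∫⁻ h in C₂, (‖g h - Fb h‖₊ : ℝ≥0∞) ∂ν) := by
        have mA : Measurable fun h : G => (‖Fb (h * s) - g (h * s)‖₊ : ℝ≥0∞) := by
          exact ((hFbm.comp (measurable_mul_const s)).sub
            (hgm.comp (measurable_mul_const s))).nnnorm.coe_nnreal_ennreal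
        have mB : Measurable fun h : G => (‖g (h * s) - g h‖₊ : ℝ≥0∞) := by
          exact ((hgm.comp (measurable_mul_const s)).sub hgm).nnnorm.coe_nnreal_ennreal
        rw [lintegral_add_left (f := fun h : G => (‖Fb (h * s) - g (h * s)‖₊ : ℝ≥0∞) + (‖g (h * s) - g h‖₊ : ℝ≥0∞)) (mA.add mB), lintegral_add_left mA]
    _ ≤ ε / 3 + ε / 3 + ε / 3 := by
        gcongr
        · calc ∫⁻ h in C₂, (‖Fb (h * s) - g (h * s)‖₊ : ℝ≥0∞) ∂ν
              ≤ ∫⁻ h, (‖Fb (h * s) - g (h * s)‖₊ : ℝ≥0∞) ∂ν :=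
                setLIntegral_le_lintegral _ _
            _ = ∫⁻ h, (‖Fb h - g h‖₊ : ℝ≥0∞) ∂ν :=
                lintegral_mul_right_eq_self (fun h => (‖Fb h - g h‖₊ : ℝ≥0∞)) s
            _ ≤ ε / 3 := by
                refine le_trans (le_of_eq ?_) hgnorm
                congr 1
        · calc ∫⁻ h in C₂, (‖g h - Fb h‖₊ : ℝ≥0∞) ∂ν
              ≤ ∫⁻ h, (‖g h - Fb h‖₊ : ℝ≥0∞) ∂ν := setLIntegral_le_lintegral _ _
            _ = ∫⁻ h, (‖Fb h - g h‖₊ : ℝ≥0∞) ∂ν := by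
                congr 1; funext h
                rw [show g h - Fb h = -(Fb h - g h) by ring, nnnorm_neg]
            _ ≤ ε / 3 := by
                refine le_trans (le_of_eq ?_) hgnorm
                congr 1
    _ = ε := ENNReal.add_thirds ε
end Tendsto


section Main

variable [ν.IsMulRightInvariant] [ν.Regular] [IsFiniteMeasureOnCompacts ν]

lemma tendsto_Tt (hq : Measurable q) (hqb : ∀ y, ‖q y‖ ≤ 2)
    (hact : Measurable fun p : G × X => p.1 • p.2) (x : X)
    {C : Set G} (hCc : IsCompact C) (hCcl : IsClosed C) (a : G) :
    Tendsto (fun b => Tt q ν C x a b) (𝓝 a) (𝓝 0) := by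
  set Ca : Set G := (Homeomorph.mulRight a) '' C with hCadef
  have hCac : IsCompact Ca := hCc.image (Homeomorph.mulRight a).continuous
  have hCacl : IsClosed Ca := (Homeomorph.isClosed_image _).mpr hCcl
  have key : ∀ b : G, Tt q ν C x a b
      = ∫⁻ h in Ca, (‖q ((h * (a⁻¹ * b)) • x) - q (h • x)‖₊ : ℝ≥0∞) ∂ν := by
    intro b
    rw [Tt, ← lintegral_indicator hCcl.measurableSet, ← lintegral_indicator hCacl.measurableSet]
    rw [← lintegral_mul_right_eq_self
      (fun h => Ca.indicator (fun h => (‖q ((h * (a⁻¹ * b)) • x) - q (h • x)‖₊ : ℝ≥0∞)) h) a]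
    congr 1
    funext h
    by_cases hh : h ∈ C
    · have hmem : h * a ∈ Ca := mem_image_of_mem _ hh
      rw [indicator_of_mem hh, indicator_of_mem hmem]
      have : h * a * (a⁻¹ * b) = h * b := by group
      rw [this]
    · have hmem : h * a ∉ Ca := by
        intro hc
        rw [hCadef] at hc
        obtain ⟨y, hy, hyy⟩ := hc
        have : y = h := by
          have : y * a = h * a := hyy
          exact mul_right_cancel this
        exact hh (this ▸ hy)
      rw [indicator_of_notMem hh, indicator_of_notMem hmem]
  have hcomp : Tendsto (fun b : G => a⁻¹ * b) (𝓝 a) (𝓝 1) := by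
    have := (continuous_mul_left a⁻¹ : Continuous fun b : G => a⁻¹ * b).tendsto a
    simpa using this
  have := (psi_tendsto (ν := ν) hq hqb hact x hCac hCacl.measurableSet).comp hcomp
  refine Tendsto.congr (fun b => ?_) this
  rw [key b]
  rfl

/-- Points in the closure of the stabilizer have vanishing `Phi`. -/
lemma phi_zero_of_mem_closure (hq : Measurable q) (hqi : Function.Injective q)
    (hqb : ∀ y, ‖q y‖ ≤ 2) (hact : Measurable fun p : G × X => p.1 • p.2)
    {C : Set G} (hCc : IsCompact C) (hCcl : IsClosed C) (hCpos : 0 < ν C)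
    {x : X} {k : G} (hk : k ∈ closure {g : G | g • x = x}) : Phi q ν C x k = 0 := by
  have hle : ∀ ε : ℝ≥0∞, 0 < ε → Phi q ν C x k ≤ ε := by
    intro ε hε
    have hT := tendsto_Tt (ν := ν) hq hqb hact x hCc hCcl k
    have hmem : {b : G | Tt q ν C x k b ≤ ε} ∈ 𝓝 k := by
      have h1 : {b : G | Tt q ν C x k b < ε} ∈ 𝓝 k := hT (Iio_mem_nhds hε)
      filter_upwards [h1] with b hb
      exact le_of_lt hb
    obtain ⟨k', hk'T, hk'S⟩ := mem_closure_iff_nhds.mp hk _ hmem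
    have h1 : Phi q ν C x k' = 0 := by
      rw [phi_zero_iff hq hact hqi hCcl.measurableSet hCpos]
      exact hk'S
    calc Phi q ν C x k ≤ Phi q ν C x k' + Tt q ν C x k' k :=
          phi_le ν C hq hact x k' k
      _ = Tt q ν C x k' k := by rw [h1, zero_add]
      _ = Tt q ν C x k k' := tt_symm ν C x k' k
      _ ≤ ε := hk'T
  have : Phi q ν C x k ≤ 0 := by
    refine ENNReal.le_of_forall_pos_le_add fun ε hε _ => ?_
    rw [zero_add]
    exact hle ε (by exact_mod_cast hε)
  exact le_antisymm this zero_le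

/-- The stabilizer of any point is closed. -/
lemma stab_closed (hq : Measurable q) (hqi : Function.Injective q)
    (hqb : ∀ y, ‖q y‖ ≤ 2) (hact : Measurable fun p : G × X => p.1 • p.2)
    {C : Set G} (hCc : IsCompact C) (hCcl : IsClosed C) (hCpos : 0 < ν C)
    (x : X) : IsClosed {g : G | g • x = x} := by
  refine isClosed_of_closure_subset fun k hk => ?_
  have := phi_zero_of_mem_closure hq hqi hqb hact hCc hCcl hCpos hk
  rwa [phi_zero_iff hq hact hqi hCcl.measurableSet hCpos] at this

/-- Characterization of stabilizer meeting the closure of an open set, via the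
infimum of `Phi` over a countable dense subset. -/
lemma stab_meets_iff (hq : Measurable q) (hqi : Function.Injective q)
    (hqb : ∀ y, ‖q y‖ ≤ 2) (hact : Measurable fun p : G × X => p.1 • p.2)
    {C : Set G} (hCc : IsCompact C) (hCcl : IsClosed C) (hCpos : 0 < ν C)
    {D : Set G} (hD : Dense D) {V : Set G} (hV : IsOpen V) (hVc : IsCompact (closure V))
    (x : X) :
    ({g : G | g • x = x} ∩ closure V).Nonempty ↔ (⨅ k : ↥(D ∩ V), Phi q ν C x k) = 0 := by
  have hdense : closure V ⊆ closure (D ∩ V) := by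
    rw [← closure_closure (s := D ∩ V)]
    apply closure_mono
    intro g hg
    rw [mem_closure_iff_nhds]
    intro N hN
    obtain ⟨O, hON, hO, hgO⟩ := mem_nhds_iff.mp (inter_mem hN (hV.mem_nhds hg))
    obtain ⟨y, hy⟩ := hD.inter_open_nonempty O hO ⟨g, hgO⟩
    exact ⟨y, (hON hy.1).1, hy.2, (hON hy.1).2⟩
  constructor
  · rintro ⟨k₀, hk₀S, hk₀V⟩
    have hphi0 : Phi q ν C x k₀ = 0 := by
      rw [phi_zero_iff hq hact hqi hCcl.measurableSet hCpos]; exact hk₀S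
    refine le_antisymm ?_ zero_le
    refine ENNReal.le_of_forall_pos_le_add fun ε hε _ => ?_
    rw [zero_add]
    have hT := tendsto_Tt (ν := ν) hq hqb hact x hCc hCcl k₀
    have hmem : {b : G | Tt q ν C x k₀ b ≤ ε} ∈ 𝓝 k₀ := by
      have h1 : {b : G | Tt q ν C x k₀ b < ε} ∈ 𝓝 k₀ :=
        hT (Iio_mem_nhds (by exact_mod_cast hε))
      filter_upwards [h1] with b hb
      exact le_of_lt hb
    obtain ⟨k', hk'T, hk'D⟩ := mem_closure_iff_nhds.mp (hdense hk₀V) _ hmem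
    refine le_trans (iInf_le _ (⟨k', hk'D⟩ : ↥(D ∩ V))) ?_
    calc Phi q ν C x k' ≤ Phi q ν C x k₀ + Tt q ν C x k₀ k' :=
          phi_le ν C hq hact x k₀ k'
      _ = Tt q ν C x k₀ k' := by rw [hphi0, zero_add]
      _ ≤ ε := hk'T
  · intro hinf
    have hne : Nonempty ↥(D ∩ V) := by
      by_contra hemp
      haveI := not_nonempty_iff.mp hemp
      rw [iInf_of_empty] at hinf
      exact (by simp : (⊤ : ℝ≥0∞) ≠ 0) hinf
    -- construct a sequence with small Phi
    have hseq : ∀ n : ℕ, ∃ k : ↥(D ∩ V), Phi q ν C x k < (n : ℝ≥0∞)⁻¹ := by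
      intro n
      have hpos : (0 : ℝ≥0∞) < (n : ℝ≥0∞)⁻¹ :=
        ENNReal.inv_pos.mpr (ENNReal.natCast_ne_top n)
      rw [← hinf] at hpos
      exact iInf_lt_iff.mp hpos
    choose k hk using hseq
    -- the sequence lives in the compact set `closure V`
    have hrange : ∀ n, (k n : G) ∈ closure V := fun n => subset_closure (k n).2.2
    haveI hNB : (Filter.map (fun n : ℕ => (k n : G)) atTop).NeBot :=
      Filter.map_neBot (f := atTop) (m := fun n : ℕ => (k n : G))
    obtain ⟨k₀, hk₀V, hcl⟩ := hVc.exists_clusterPt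
      (f := Filter.map (fun n : ℕ => (k n : G)) atTop)
      (le_principal_iff.mpr (mem_map.mpr (Eventually.of_forall hrange)))
    have hphi : Phi q ν C x k₀ = 0 := by
      have hle : ∀ ε : ℝ≥0∞, 0 < ε → Phi q ν C x k₀ ≤ ε + ε := by
        intro ε hε
        have hT := tendsto_Tt (ν := ν) hq hqb hact x hCc hCcl k₀
        have hmem : {b : G | Tt q ν C x k₀ b ≤ ε} ∈ 𝓝 k₀ := by
          have h1 : {b : G | Tt q ν C x k₀ b < ε} ∈ 𝓝 k₀ := hT (Iio_mem_nhds hε)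
          filter_upwards [h1] with b hb
          exact le_of_lt hb
        have hfreq : ∃ᶠ n in atTop, (k n : G) ∈ {b : G | Tt q ν C x k₀ b ≤ ε} :=
          (mapClusterPt_iff_frequently.mp hcl) _ hmem
        have hev : ∀ᶠ (n : ℕ) in atTop, ((n : ℕ) : ℝ≥0∞)⁻¹ ≤ ε :=
          ENNReal.tendsto_nhds_zero.mp ENNReal.tendsto_inv_nat_nhds_zero ε hε
        obtain ⟨n, hn1, hn2⟩ := (hfreq.and_eventually hev).exists
        calc Phi q ν C x k₀ ≤ Phi q ν C x (k n) + Tt q ν C x (k n) k₀ :=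
              phi_le ν C hq hact x (k n) k₀
          _ ≤ (n : ℝ≥0∞)⁻¹ + Tt q ν C x k₀ (k n) := by
              rw [tt_symm ν C x (k n) k₀]
              exact add_le_add (hk n).le le_rfl
          _ ≤ ε + ε := add_le_add hn2 hn1
      have : Phi q ν C x k₀ ≤ 0 := by
        refine ENNReal.le_of_forall_pos_le_add fun ε hε _ => ?_
        rw [zero_add]
        have hε2 : (0 : ℝ≥0∞) < (ε : ℝ≥0∞) / 2 :=
          ENNReal.half_pos (by exact_mod_cast hε.ne')
        calc Phi q ν C x k₀ ≤ ε / 2 + ε / 2 := hle _ hε2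
          _ = ε := ENNReal.add_halves _
      exact le_antisymm this zero_le
    exact ⟨k₀, by rwa [phi_zero_iff hq hact hqi hCcl.measurableSet hCpos] at hphi, hk₀V⟩

end Main

end StabAux

namespace StabTopo
open TopologicalSpace

lemma genOpen_biInter_finite {α β : Type*} {g : Set (Set α)} {T : Set β} (hT : T.Finite)
    {f : β → Set α} (hf : ∀ b ∈ T, TopologicalSpace.GenerateOpen g (f b)) :
    TopologicalSpace.GenerateOpen g (⋂ b ∈ T, f b) := by
  refine Set.Finite.induction_on_subset (motive := fun t _ => TopologicalSpace.GenerateOpen g (⋂ b ∈ t, f b)) T hT ?_ ?_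
  · simpa using TopologicalSpace.GenerateOpen.univ
  · intro a s haT _ _ ih
    rw [biInter_insert]
    exact TopologicalSpace.GenerateOpen.inter _ _ (hf _ haT) ih

variable {G : Type*} [Group G] [TopologicalSpace G] [IsTopologicalGroup G]
    [LocallyCompactSpace G] [SecondCountableTopology G]

set_option linter.unusedSectionVars false

/-- In a locally compact regular space, inside any open set around a point there is a basic
open set with compact closure inside the open set. -/
lemma exists_basic_nhd (W : Set G) (hW : IsOpen W) {g : G} (hg : g ∈ W) :
    ∃ V ∈ countableBasis G, g ∈ V ∧ closure V ⊆ W ∧ IsCompact (closure V) := by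
  obtain ⟨t, htn, htcl, htW⟩ := exists_mem_nhds_isClosed_subset (hW.mem_nhds hg)
  obtain ⟨c, hcn, hcsub, hcc⟩ := local_compact_nhds htn
  obtain ⟨V, hVB, hgV, hVsub⟩ := (isBasis_countableBasis G).exists_subset_of_mem_open
    (mem_interior_iff_mem_nhds.mpr hcn) isOpen_interior
  have h1 : closure V ⊆ closure c := closure_mono (hVsub.trans interior_subset)
  have h2 : closure c ⊆ t := htcl.closure_subset_iff.mpr hcsub
  exact ⟨V, hVB, hgV, h1.trans (h2.trans htW),
    hcc.closure.of_isClosed_subset isClosed_closure h1⟩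

/-- The countable subbasis for the Chabauty topology. -/
def chabautySubbasis (G : Type*) [Group G] [TopologicalSpace G]
    [SecondCountableTopology G] : Set (Set (SubG G)) :=
  ((fun V => {H : SubG G | (((H.1 : Subgroup G) : Set G) ∩ V).Nonempty}) ''
    (countableBasis G)) ∪
  ((fun V => {H : SubG G | ((H.1 : Subgroup G) : Set G) ∩ closure V = ∅}) ''
    {V | V ∈ countableBasis G ∧ IsCompact (closure V)})

lemma countable_chabautySubbasis : (chabautySubbasis G).Countable := by
  refine Set.Countable.union ?_ ?_
  · exact (countable_countableBasis G).image _
  · exact ((countable_countableBasis G).mono (fun V hV => hV.1)).image _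

lemma gen_nonempty (U : Set G) (hU : IsOpen U) :
    TopologicalSpace.GenerateOpen (chabautySubbasis G)
      {H : SubG G | (((H.1 : Subgroup G) : Set G) ∩ U).Nonempty} := by
  have heq : {H : SubG G | (((H.1 : Subgroup G) : Set G) ∩ U).Nonempty}
      = ⋃₀ ((fun V => {H : SubG G | (((H.1 : Subgroup G) : Set G) ∩ V).Nonempty}) ''
          {V | V ∈ countableBasis G ∧ V ⊆ U}) := by
    ext H
    simp only [mem_setOf_eq, sUnion_image, mem_iUnion]
    constructor
    · rintro ⟨g, hgH, hgU⟩
      obtain ⟨V, hVB, hgV, hVU⟩ := (isBasis_countableBasis G).exists_subset_of_mem_open hgU hU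
      exact ⟨V, ⟨hVB, hVU⟩, g, hgH, hgV⟩
    · rintro ⟨V, ⟨_, hVU⟩, g, hgH, hgV⟩
      exact ⟨g, hgH, hVU hgV⟩
  rw [heq]
  refine TopologicalSpace.GenerateOpen.sUnion _ ?_
  rintro s ⟨V, hV, rfl⟩
  exact TopologicalSpace.GenerateOpen.basic _ (Or.inl (mem_image_of_mem _ hV.1))

lemma gen_avoid (K : Set G) (hK : IsCompact K) :
    TopologicalSpace.GenerateOpen (chabautySubbasis G)
      {H : SubG G | ((H.1 : Subgroup G) : Set G) ∩ K = ∅} := by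
  classical
  have heq : {H : SubG G | ((H.1 : Subgroup G) : Set G) ∩ K = ∅}
      = ⋃₀ ((fun T : Set (Set G) =>
            ⋂ V ∈ T, {H : SubG G | ((H.1 : Subgroup G) : Set G) ∩ closure V = ∅}) ''
          {T : Set (Set G) | T.Finite ∧
            (T ⊆ {V | V ∈ countableBasis G ∧ IsCompact (closure V)}) ∧ K ⊆ ⋃₀ T}) := by
    ext H
    simp only [mem_setOf_eq, sUnion_image, mem_iUnion, mem_iInter]
    constructor
    · intro hHK
      have hcov : ∀ g ∈ K, ∃ V ∈ countableBasis G,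
          g ∈ V ∧ closure V ⊆ (((H.1 : Subgroup G) : Set G))ᶜ ∧ IsCompact (closure V) := by
        intro g hg
        have hgc : g ∈ (((H.1 : Subgroup G) : Set G))ᶜ := fun hc =>
          (eq_empty_iff_forall_notMem.mp hHK g) ⟨hc, hg⟩
        exact exists_basic_nhd _ H.2.isOpen_compl hgc
      choose! V hVB hgV hVsub hVc using hcov
      obtain ⟨s, hsK, hsfin, hscov⟩ := hK.elim_finite_subcover_image
        (fun g hg => isOpen_of_mem_countableBasis (hVB g hg))
        (fun y hy => mem_biUnion hy (hgV y hy))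
      refine ⟨V '' s, ⟨hsfin.image V, ?_, ?_⟩, ?_⟩
      · rintro W ⟨g, hgs, rfl⟩
        exact ⟨hVB g (hsK hgs), hVc g (hsK hgs)⟩
      · intro y hy
        obtain ⟨g', hg', hgV'⟩ := mem_iUnion₂.mp (hscov hy)
        exact ⟨V g', mem_image_of_mem V hg', hgV'⟩
      · rintro W ⟨g, hgs, rfl⟩
        rw [eq_empty_iff_forall_notMem]
        rintro y ⟨hyH, hyV⟩
        exact (hVsub g (hsK hgs) hyV) hyH
    · rintro ⟨T, ⟨_, _, hKT⟩, hT⟩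
      rw [eq_empty_iff_forall_notMem]
      rintro y ⟨hyH, hyK⟩
      obtain ⟨W, hWT, hyW⟩ := hKT hyK
      exact (eq_empty_iff_forall_notMem.mp (hT W hWT) y) ⟨hyH, subset_closure hyW⟩
  rw [heq]
  refine TopologicalSpace.GenerateOpen.sUnion _ ?_
  rintro s ⟨T, hT, rfl⟩
  refine genOpen_biInter_finite hT.1 fun V hV => ?_
  exact TopologicalSpace.GenerateOpen.basic _ (Or.inr (mem_image_of_mem _ (hT.2.1 hV)))

/-- Every Chabauty-open set is open in the topology generated by the countable subbasis. -/
lemma le_chabauty : generateFrom (chabautySubbasis G) ≤ SubG.topologicalSpace G := by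
  have h1 : SubG.topologicalSpace G
      = generateFrom ((preimage (fun H : SubG G => ((H.1 : Subgroup G) : Set G))) ''
        ({S | ∃ K : Set G, IsCompact K ∧ S = {A : Set G | A ∩ K = ∅}} ∪
         {S | ∃ U : Set G, IsOpen U ∧ S = {A : Set G | (A ∩ U).Nonempty}})) := by
    rw [SubG.topologicalSpace, fellTopology, induced_generateFrom_eq]
  rw [h1]
  refine le_generateFrom ?_
  rintro s ⟨S, hS, rfl⟩
  rcases hS with ⟨K, hK, rfl⟩ | ⟨U, hU, rfl⟩
  · exact gen_avoid K hK
  · exact gen_nonempty U hU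

lemma open_eq_sUnion_chabauty {u : Set (SubG G)} (hu : IsOpen u) :
    ∃ S ⊆ (fun f : Set (Set (SubG G)) => ⋂₀ f) '' {f : Set (Set (SubG G)) | f.Finite ∧ f ⊆ chabautySubbasis G},
      u = ⋃₀ S := by
  have hu' : IsOpen[generateFrom (chabautySubbasis G)] u := le_chabauty u hu
  exact @TopologicalSpace.IsTopologicalBasis.open_eq_sUnion _
    (generateFrom (chabautySubbasis G)) _
    (@isTopologicalBasis_of_subbasis _ (generateFrom (chabautySubbasis G))
      (chabautySubbasis G) rfl) u hu'



end StabTopo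

/-- **Closedness and measurability of stabilizers.**
Let `G` be a locally compact second countable group acting measurably on a standard Borel
space `X`.  Then every stabilizer `G_x` is a closed subgroup of `G`, and the stabilizer
map `x ↦ G_x` into the Chabauty space of closed subgroups is Borel measurable. -/
theorem stabilizer_isClosed_and_measurable
    {G : Type*} [Group G] [TopologicalSpace G] [IsTopologicalGroup G]
    [LocallyCompactSpace G] [SecondCountableTopology G]
    [MeasurableSpace G] [BorelSpace G]
    {X : Type*} [MeasurableSpace X] [StandardBorelSpace X]
    [MulAction G X] (hact : Measurable fun p : G × X => p.1 • p.2) :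
    ∃ hcl : ∀ x : X, IsClosed ((MulAction.stabilizer G x : Subgroup G) : Set G),
      Measurable fun x : X => (⟨MulAction.stabilizer G x, hcl x⟩ : SubG G) := by
  classical
  obtain ⟨e, he⟩ := MeasureTheory.exists_measurableEmbedding_real (α := X)
  set q : X → ℝ := fun y => Real.arctan (e y) with hqdef
  have hq : Measurable q := Real.continuous_arctan.measurable.comp he.measurable
  have hqi : Function.Injective q := fun a b hab =>
    he.injective (Real.arctan_injective hab)
  have hqb : ∀ y, ‖q y‖ ≤ 2 := by
    intro y
    rw [Real.norm_eq_abs, abs_le]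
    have h1 := Real.arctan_lt_pi_div_two (e y)
    have h2 := Real.neg_pi_div_two_lt_arctan (e y)
    have hpi := Real.pi_lt_d2
    constructor <;> nlinarith
  obtain ⟨K₀, hK₀c, hK₀n⟩ := exists_compact_mem_nhds (1 : G)
  set C : Set G := closure K₀ with hCdef
  have hCc : IsCompact C := hK₀c.closure
  have hCcl : IsClosed C := isClosed_closure
  have hCpos : 0 < (MeasureTheory.Measure.haar : Measure G).inv C := by
    have h1 : (1 : G) ∈ interior C :=
      mem_interior_iff_mem_nhds.mpr (mem_of_superset hK₀n subset_closure)
    exact (isOpen_interior.measure_pos _ ⟨1, h1⟩).trans_le (measure_mono interior_subset)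
  have hstabset : ∀ x : X, ((MulAction.stabilizer G x : Subgroup G) : Set G)
      = {g : G | g • x = x} := by
    intro x; ext g; exact MulAction.mem_stabilizer_iff
  have hcl : ∀ x : X, IsClosed ((MulAction.stabilizer G x : Subgroup G) : Set G) := by
    intro x
    rw [hstabset]
    exact StabAux.stab_closed (ν := (MeasureTheory.Measure.haar : Measure G).inv)
      hq hqi hqb hact hCc hCcl hCpos x
  refine ⟨hcl, ?_⟩
  obtain ⟨D, hDc, hDd⟩ := TopologicalSpace.exists_countable_dense G
  -- measurability of the basic "meets a compact closure" sets
  have hmeets : ∀ (V : Set G), IsOpen V → IsCompact (closure V) →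
      MeasurableSet {x : X | ({g : G | g • x = x} ∩ closure V).Nonempty} := by
    intro V hV hVcc
    have heq : {x : X | ({g : G | g • x = x} ∩ closure V).Nonempty}
        = {x : X | (⨅ k : ↥(D ∩ V),
            StabAux.Phi q (MeasureTheory.Measure.haar : Measure G).inv C x k) = 0} := by
      ext x
      exact StabAux.stab_meets_iff (ν := (MeasureTheory.Measure.haar : Measure G).inv)
        hq hqi hqb hact hCc hCcl hCpos hDd hV hVcc x
    rw [heq]
    have hm : Measurable fun x : X => ⨅ k : ↥(D ∩ V),
        StabAux.Phi q (MeasureTheory.Measure.haar : Measure G).inv C x k := by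
      haveI : Countable ↥(D ∩ V) := (hDc.mono inter_subset_left).to_subtype
      exact Measurable.iInf fun k =>
        StabAux.measurable_Phi (MeasureTheory.Measure.haar : Measure G).inv C hq hact k
    exact hm (measurableSet_singleton 0)
  set f : X → SubG G := fun x => (⟨MulAction.stabilizer G x, hcl x⟩ : SubG G) with hfdef
  have hsub_meas : ∀ s ∈ StabTopo.chabautySubbasis G, MeasurableSet (f ⁻¹' s) := by
    rintro s (⟨V, hVB, rfl⟩ | ⟨V, ⟨hVB, hVcc⟩, rfl⟩)
    · have heq : f ⁻¹' {H : SubG G | (((H.1 : Subgroup G) : Set G) ∩ V).Nonempty}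
          = ⋃ V' ∈ {V' | V' ∈ TopologicalSpace.countableBasis G ∧ closure V' ⊆ V ∧
              IsCompact (closure V')},
              {x : X | ({g : G | g • x = x} ∩ closure V').Nonempty} := by
        ext x
        simp only [mem_preimage, mem_setOf_eq, mem_iUnion, hfdef, hstabset x]
        constructor
        · rintro ⟨g, hgH, hgV⟩
          obtain ⟨V', hV'B, hgV', hV'sub, hV'c⟩ :=
            StabTopo.exists_basic_nhd V (TopologicalSpace.isOpen_of_mem_countableBasis hVB) hgV
          exact ⟨V', ⟨hV'B, hV'sub, hV'c⟩, g, hgH, subset_closure hgV'⟩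
        · rintro ⟨V', ⟨_, hsub, _⟩, g, hgS, hgV'⟩
          exact ⟨g, hgS, hsub hgV'⟩
      rw [heq]
      refine MeasurableSet.biUnion
        ((TopologicalSpace.countable_countableBasis G).mono fun V' hV' => hV'.1)
        fun V' hV' => hmeets V'
          (TopologicalSpace.isOpen_of_mem_countableBasis hV'.1) hV'.2.2
    · have heq : f ⁻¹' {H : SubG G | ((H.1 : Subgroup G) : Set G) ∩ closure V = ∅}
          = {x : X | ({g : G | g • x = x} ∩ closure V).Nonempty}ᶜ := by
        ext x
        simp only [mem_preimage, mem_setOf_eq, mem_compl_iff, hfdef, hstabset x,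
          ← not_nonempty_iff_eq_empty]
      rw [heq]
      exact (hmeets V (TopologicalSpace.isOpen_of_mem_countableBasis hVB) hVcc).compl
  refine measurable_generateFrom ?_
  intro u hu
  obtain ⟨S, hSsub, rfl⟩ := StabTopo.open_eq_sUnion_chabauty hu
  have hScnt : S.Countable :=
    ((countable_setOf_finite_subset StabTopo.countable_chabautySubbasis).image _).mono hSsub
  rw [preimage_sUnion]
  refine MeasurableSet.biUnion hScnt fun t htS => ?_
  obtain ⟨F, ⟨hFfin, hFsub⟩, rfl⟩ := hSsub htS
  show MeasurableSet (f ⁻¹' ⋂₀ F)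
  rw [sInter_eq_biInter, preimage_iInter₂]
  exact MeasurableSet.biInter hFfin.countable fun s hs => hsub_meas s (hFsub hs)
end
end

section
/- Let G be a locally compact second countable group with left Haar measure ℓ, and let H be a closed subgroup such that there is a nonzero left-H-invariant σ-finite measure η on H (Haar measure of H viewed in G). Suppose ℓ disintegrates over the quotient map p : G → H\G with factor measure ν̂ and fiber measures η̂_{Hg} supported on the cosets Hg. Then for ν̂-almost every coset Hg, the fiber measure η̂_{Hg} is invariant under left multiplication by every element of H. -/
open MeasureTheory Filter Set Topology
open scoped ENNReal Pointwise

/-- Two regular measures on a locally compact regular space with equal integrals of all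
continuous compactly supported real functions are equal. -/
private lemma ext_of_forall_integral_Cc_aux {X : Type*} [TopologicalSpace X] [MeasurableSpace X]
    [BorelSpace X] [LocallyCompactSpace X] [RegularSpace X]
    {μ ν : Measure X} [μ.Regular] [ν.Regular]
    (h : ∀ f : X → ℝ, Continuous f → HasCompactSupport f → ∫ x, f x ∂μ = ∫ x, f x ∂ν) :
    μ = ν := by
  have hk : ∀ k : Set X, IsCompact k → μ k = ν k := by
    intro k hkc
    rw [hkc.measure_eq_biInf_integral_hasCompactSupport μ,
      hkc.measure_eq_biInf_integral_hasCompactSupport ν]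
    exact iInf_congr fun f => iInf_congr fun hc => iInf_congr fun hcs => iInf_congr fun _ =>
      iInf_congr fun _ => by rw [h f hc hcs]
  have hU : ∀ U : Set X, IsOpen U → μ U = ν U := fun U hUo => by
    rw [hUo.measure_eq_iSup_isCompact μ, hUo.measure_eq_iSup_isCompact ν]
    exact iSup_congr fun K => iSup_congr fun _ => iSup_congr fun hK => hk K hK
  ext s hs
  rw [Set.measure_eq_iInf_isOpen s μ, Set.measure_eq_iInf_isOpen s ν]
  exact iInf_congr fun U => iInf_congr fun _ => iInf_congr fun hU' => hU U hU'

/-- **Fiber measures of a disintegration of Haar measure are a.e. `H`-invariant.**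
Let `G` be a locally compact second countable group, `H` a closed subgroup, and `ℓ` a left
Haar measure on `G`.  Suppose `ℓ` disintegrates over the quotient map `G → H\G` (the space
of right cosets) with σ-finite factor measure `ν` and σ-finite fiber measures `η q`
supported on the corresponding cosets.  Then for `ν`-almost every coset `q`, the fiber
measure `η q` is invariant under left multiplication by every element of `H`. -/
theorem disintegration_fibers_ae_left_H_invariant
    {G : Type*} [Group G] [TopologicalSpace G] [IsTopologicalGroup G]
    [LocallyCompactSpace G] [SecondCountableTopology G]
    [MeasurableSpace G] [BorelSpace G]
    (H : Subgroup G) (hH : IsClosed (H : Set G))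
    (ℓ : Measure G) [ℓ.IsHaarMeasure]
    (ν : Measure (Quotient (QuotientGroup.rightRel H))) [SigmaFinite ν]
    (η : Quotient (QuotientGroup.rightRel H) → Measure G)
    (hη : Measurable η) (hsf : ∀ q, SigmaFinite (η q))
    (hsupp : ∀ q, η q {x : G | Quotient.mk (QuotientGroup.rightRel H) x ≠ q} = 0)
    (hdis : ℓ = ν.bind η) :
    ∀ᵐ q ∂ν, ∀ h ∈ H, Measure.map (fun x : G => h * x) (η q) = η q := by
  classical
  set p : G → Quotient (QuotientGroup.rightRel H) :=
    Quotient.mk (QuotientGroup.rightRel H) with hp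
  have hpm : Measurable p := measurable_quotient_mk''
  -- left multiplication by an element of `H` preserves each fiber of `p`
  have hmk : ∀ h : G, h ∈ H → ∀ x : G, p (h * x) = p x := by
    intro h hh x
    refine Quotient.sound (QuotientGroup.rightRel_apply.mpr ?_)
    simpa [mul_inv_rev, mul_inv_cancel_left] using inv_mem hh
  -- fibers are closed
  have hfibclosed : ∀ q, IsClosed {x : G | p x = q} := by
    intro q
    have : {x : G | p x = q} = (fun x : G => Quotient.out q * x⁻¹) ⁻¹' (H : Set G) := by
      ext x
      simp only [mem_setOf_eq, mem_preimage, SetLike.mem_coe, hp, Quotient.mk_eq_iff_out]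
      exact QuotientGroup.rightRel_apply
    rw [this]
    exact IsClosed.preimage (continuous_const.mul continuous_inv) hH
  have hsing : ∀ q, MeasurableSet {x : G | p x ≠ q} := fun q =>
    (hfibclosed q).measurableSet.compl
  -- the basic disintegration identity
  have L1 : ∀ ηf : Quotient (QuotientGroup.rightRel H) → Measure G, Measurable ηf →
      (∀ q, ηf q {x : G | p x ≠ q} = 0) →
      ∀ s : Set G, MeasurableSet s → ∀ B, MeasurableSet B →
      (ν.bind ηf) (s ∩ p ⁻¹' B) = ∫⁻ q in B, ηf q s ∂ν := by
    intro ηf hηf hsuppf s hs B hB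
    rw [Measure.bind_apply (hs.inter (hpm hB)) hηf.aemeasurable, ← lintegral_indicator hB]
    refine lintegral_congr fun q => ?_
    by_cases hqB : q ∈ B
    · rw [indicator_of_mem hqB]
      refine le_antisymm (measure_mono inter_subset_left) ?_
      have hsub : s ⊆ (s ∩ p ⁻¹' B) ∪ {x : G | p x ≠ q} := by
        intro x hx
        by_cases hpx : p x ∈ B
        · exact Or.inl ⟨hx, hpx⟩
        · exact Or.inr fun hcon => hpx (hcon ▸ hqB)
      calc ηf q s ≤ ηf q ((s ∩ p ⁻¹' B) ∪ {x : G | p x ≠ q}) := measure_mono hsub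
        _ ≤ ηf q (s ∩ p ⁻¹' B) + ηf q {x : G | p x ≠ q} := measure_union_le _ _
        _ = ηf q (s ∩ p ⁻¹' B) := by rw [hsuppf q, add_zero]
    · rw [indicator_of_notMem hqB]
      refine measure_mono_null (fun x hx => ?_) (hsuppf q)
      exact fun hcon => hqB (hcon ▸ hx.2)
  -- mapping the fibers by `h ∈ H` gives another disintegration with the same factor
  have hη' : ∀ h : G, Measurable fun q => (η q).map (fun x : G => h * x) := fun h =>
    (Measure.measurable_map _ (measurable_const_mul h)).comp hη
  have hsupp' : ∀ h : G, h ∈ H → ∀ q,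
      ((η q).map (fun x : G => h * x)) {x : G | p x ≠ q} = 0 := by
    intro h hh q
    rw [Measure.map_apply (measurable_const_mul h) (hsing q)]
    have : (fun x : G => h * x) ⁻¹' {x : G | p x ≠ q} = {x : G | p x ≠ q} := by
      ext x; simp [hmk h hh x]
    rw [this]
    exact hsupp q
  have bindmap : ∀ h : G, h ∈ H →
      ν.bind (fun q => (η q).map (fun x : G => h * x)) = ν.bind η := by
    intro h hh
    have : ν.bind (fun q => (η q).map (fun x : G => h * x))
        = (ν.bind η).map (fun x : G => h * x) := by
      ext t ht
      rw [Measure.map_apply (measurable_const_mul h) ht,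
        Measure.bind_apply ht (hη' h).aemeasurable, Measure.bind_apply ((measurable_const_mul h) ht) hη.aemeasurable]
      exact lintegral_congr fun q => Measure.map_apply (measurable_const_mul h) ht
    rw [this, ← hdis]
    rw [show (fun x : G => h * x) = (h * ·) from rfl, map_mul_left_eq_self ℓ h, hdis]
  -- a.e. equality on a fixed measurable set
  have haeC : ∀ h : G, h ∈ H → ∀ s : Set G, MeasurableSet s →
      ∀ᵐ q ∂ν, η q s = η q ((fun x : G => h * x) ⁻¹' s) := by
    intro h hh s hs
    have := ae_eq_of_forall_setLIntegral_eq_of_sigmaFinite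
      (μ := ν) (f := fun q => η q s) (g := fun q => ((η q).map (fun x : G => h * x)) s)
      ((Measure.measurable_coe hs).comp hη) ((Measure.measurable_coe hs).comp (hη' h))
      (fun B hB _ => by
        rw [← L1 η hη hsupp s hs B hB, ← L1 _ (hη' h) (hsupp' h hh) s hs B hB, bindmap h hh])
    filter_upwards [this] with q hq
    rw [hq, Measure.map_apply (measurable_const_mul h) hs]
  -- a countable π-system generating the Borel σ-algebra
  obtain ⟨B0, hB0c, hB0⟩ : ∃ B0 : Set (Set G), B0.Countable ∧
      TopologicalSpace.IsTopologicalBasis B0 :=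
    ⟨TopologicalSpace.countableBasis G, TopologicalSpace.countable_countableBasis G,
      TopologicalSpace.isBasis_countableBasis G⟩
  set S : Set (Set G) := {s | ∃ T : Set (Set G), T.Finite ∧ T ⊆ B0 ∧ T.Nonempty ∧ s = ⋂₀ T}
    with hSdef
  have hSc : S.Countable := by
    have hsub : S ⊆ Set.sInter '' {T : Set (Set G) | T.Finite ∧ T ⊆ B0} := by
      rintro s ⟨T, hTf, hTB, -, rfl⟩
      exact ⟨T, ⟨hTf, hTB⟩, rfl⟩
    exact Set.Countable.mono hsub ((Set.countable_setOf_finite_subset hB0c).image _)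
  have hSopen : ∀ s ∈ S, IsOpen s := by
    rintro s ⟨T, hTf, hTB, -, rfl⟩
    exact hTf.isOpen_sInter fun u hu => hB0.isOpen (hTB hu)
  have hSmeas : ∀ s ∈ S, MeasurableSet s := fun s hs => (hSopen s hs).measurableSet
  have hSpi : IsPiSystem S := by
    rintro s ⟨T1, h1f, h1B, h1n, rfl⟩ t ⟨T2, h2f, h2B, h2n, rfl⟩ hne
    exact ⟨T1 ∪ T2, h1f.union h2f, union_subset h1B h2B, h1n.mono subset_union_left,
      (sInter_union T1 T2).symm⟩
  have hgen : (inferInstance : MeasurableSpace G) = MeasurableSpace.generateFrom S := by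
    rw [BorelSpace.measurable_eq (α := G), hB0.borel_eq_generateFrom]
    refine le_antisymm (MeasurableSpace.generateFrom_le fun u hu =>
      MeasurableSpace.measurableSet_generateFrom
        ⟨{u}, finite_singleton u, singleton_subset_iff.mpr hu, singleton_nonempty u,
          (sInter_singleton u).symm⟩) (MeasurableSpace.generateFrom_le ?_)
    rintro s ⟨T, hTf, hTB, -, rfl⟩
    exact MeasurableSet.sInter hTf.countable fun u hu =>
      MeasurableSpace.measurableSet_generateFrom (hTB hu)
  set T : Set (Set G) := {u ∈ B0 | IsCompact (closure u)} with hTdef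
  have hTS : T ⊆ S := fun u hu =>
    ⟨{u}, finite_singleton u, singleton_subset_iff.mpr hu.1, singleton_nonempty u,
      (sInter_singleton u).symm⟩
  have hTc : T.Countable := hB0c.mono (sep_subset _ _)
  have hTcover : ⋃₀ T = univ := by
    ext x
    simp only [mem_sUnion, mem_univ, iff_true]
    obtain ⟨t, htc, htx⟩ := exists_compact_mem_nhds x
    obtain ⟨u, huB, hxu, hut⟩ := hB0.mem_nhds_iff.mp htx
    exact ⟨u, ⟨huB, htc.closure.of_isClosed_subset isClosed_closure (closure_mono hut)⟩, hxu⟩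
  -- a.e. finiteness on compact sets
  obtain ⟨K⟩ : Nonempty (CompactExhaustion G) := ⟨CompactExhaustion.choice G⟩
  have hfin : ∀ᵐ q ∂ν, ∀ n, η q (closure (K n)) < ∞ := by
    rw [ae_all_iff]
    intro n
    refine ae_lt_top ((Measure.measurable_coe isClosed_closure.measurableSet).comp hη) ?_
    have : ∫⁻ q, η q (closure (K n)) ∂ν = ℓ (closure (K n)) := by
      rw [hdis, Measure.bind_apply isClosed_closure.measurableSet hη.aemeasurable]
    rw [this]
    exact ((K.isCompact n).closure.measure_lt_top).ne
  -- countable dense subset of H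
  haveI : SecondCountableTopology ↥H := TopologicalSpace.secondCountableTopology_induced ↥H G Subtype.val
  haveI : TopologicalSpace.SeparableSpace ↥H :=
    TopologicalSpace.SecondCountableTopology.to_separableSpace
  obtain ⟨D, hDc, hDd⟩ := TopologicalSpace.exists_countable_dense (↥H)
  have haeD : ∀ᵐ q ∂ν, ∀ d ∈ D, ∀ s ∈ S, η q s = η q ((fun x : G => (d : G) * x) ⁻¹' s) := by
    rw [ae_ball_iff hDc]
    intro d hd
    rw [ae_ball_iff hSc]
    intro s hs
    exact haeC (d : G) d.2 s (hSmeas s hs)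
  -- preimages under left multiplication are images
  have himg : ∀ (g : G) (s : Set G), (fun x : G => g * x) ⁻¹' s = (fun x : G => g⁻¹ * x) '' s := by
    intro g s
    ext x
    constructor
    · intro hx
      exact ⟨g * x, hx, by simp⟩
    · rintro ⟨y, hy, rfl⟩
      simpa [mul_inv_cancel_left] using hy
  -- conclusion
  filter_upwards [hfin, haeD] with q hq1 hq2
  have hFOC : IsFiniteMeasureOnCompacts (η q) := by
    constructor
    intro k hk
    obtain ⟨n, hn⟩ := K.exists_superset_of_isCompact hk
    exact lt_of_le_of_lt (measure_mono (hn.trans subset_closure)) (hq1 n)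
  haveI := hFOC
  have hmapfin : ∀ g : G, ∀ k : Set G, IsCompact k →
      ((η q).map (fun x : G => g * x)) k < ∞ := by
    intro g k hk
    calc ((η q).map (fun x : G => g * x)) k
        ≤ ((η q).map (fun x : G => g * x)) (closure k) := measure_mono subset_closure
      _ = η q ((fun x : G => g * x) ⁻¹' closure k) :=
          Measure.map_apply (measurable_const_mul g) isClosed_closure.measurableSet
      _ < ∞ := by
          rw [himg]
          exact (hk.closure.image (continuous_mul_left g⁻¹)).measure_lt_top
  -- full invariance for elements of the countable dense set
  have hDeq : ∀ d : ↥H, d ∈ D → (η q).map (fun x : G => (d : G) * x) = η q := by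
    intro d hd
    refine Measure.ext_of_generateFrom_of_cover_subset hgen hSpi hTS hTc hTcover
      (fun u hu => ((measure_mono subset_closure).trans_lt
        (hmapfin (d : G) (closure u) hu.2)).ne) (fun s hs => ?_)
    rw [Measure.map_apply (measurable_const_mul _) (hSmeas s hs)]
    exact (hq2 d hd s hs).symm
  -- extend to all of H by density
  intro h hh
  haveI : IsFiniteMeasureOnCompacts ((η q).map (fun x : G => h * x)) := ⟨hmapfin h⟩
  haveI : (η q).Regular := inferInstance
  haveI : ((η q).map (fun x : G => h * x)).Regular := inferInstance
  refine ext_of_forall_integral_Cc_aux (fun f hf hfc => ?_)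
  rw [integral_map (measurable_const_mul h).aemeasurable hf.aestronglyMeasurable]
  obtain ⟨u, huD, hu⟩ := mem_closure_iff_seq_limit.mp (hDd ⟨h, hh⟩)
  set v : ℕ → G := fun n => ((u n : ↥H) : G) with hv
  have hvt : Tendsto v atTop (𝓝 h) := (continuous_subtype_val.tendsto ⟨h, hh⟩).comp hu
  obtain ⟨C, hC⟩ := hfc.exists_bound_of_continuous hf
  have hC0 : 0 ≤ C := le_trans (norm_nonneg (f 1)) (hC 1)
  set Tset : Set G := insert h (Set.range v) with hTset
  have hTsetc : IsCompact Tset := hvt.isCompact_insert_range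
  set M : Set G := closure (Tset⁻¹ * tsupport f) with hM
  have hMc : IsCompact M := (hTsetc.inv.mul hfc).closure
  have key : Tendsto (fun n => ∫ x, f (v n * x) ∂η q) atTop (𝓝 (∫ x, f (h * x) ∂η q)) := by
    refine tendsto_integral_of_dominated_convergence (M.indicator fun _ => C)
      (fun n => (hf.comp (continuous_mul_left (v n))).aestronglyMeasurable)
      ?_ (fun n => ?_) ?_
    · rw [integrable_indicator_iff isClosed_closure.measurableSet]
      exact integrableOn_const hMc.measure_lt_top.ne
    · refine Eventually.of_forall fun x => ?_
      by_cases hx : v n * x ∈ Function.support f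
      · have hxM : x ∈ M := by
          refine subset_closure ?_
          have hxeq : x = (v n)⁻¹ * (v n * x) := by simp
          rw [hxeq]
          exact Set.mul_mem_mul (Set.inv_mem_inv.mpr (mem_insert_of_mem _ ⟨n, rfl⟩))
            (subset_tsupport f hx)
        rw [Set.indicator_of_mem hxM]
        exact hC _
      · rw [Function.notMem_support.mp hx, norm_zero]
        exact Set.indicator_apply_nonneg fun _ => hC0
    · refine Eventually.of_forall fun x => ?_
      exact (hf.tendsto (h * x)).comp (hvt.mul tendsto_const_nhds)
  have hconst : ∀ n, ∫ x, f (v n * x) ∂η q = ∫ x, f x ∂η q := by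
    intro n
    conv_rhs => rw [← hDeq (u n) (huD n)]
    rw [integral_map (measurable_const_mul _).aemeasurable hf.aestronglyMeasurable]
  simp only [hconst] at key
  exact tendsto_nhds_unique key tendsto_const_nhds
end
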